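/- arXiv:0806.3480 — 5 statements merged into one kernel-verified Lean document; each statement's English description precedes it below -/
import Mathlib

section
/- Let m, n ≥ 1 with gcd(m+1, n+1) = 1. Then the adjacency matrix of the grid graph on R = {1,…,m} × {1,…,n} (with edges between cells differing by 1 in exactly one coordinate) is invertible over ℝ. -/
open Real Finset

noncomputable section

namespace GridAux

lemma sin_ne_zero_of_abs_lt_pi {x : ℝ} (h0 : x ≠ 0) (h : |x| < π) : Real.sin x ≠ 0 := by
  rcases lt_or_gt_of_ne h0 with hx | hx
  · have h1 : 0 < -x := by linarith
    have h2 : -x < π := by rw [abs_of_neg hx] at h; exact h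
    have h3 := Real.sin_pos_of_pos_of_lt_pi h1 h2
    rw [Real.sin_neg] at h3; linarith
  · have h2 : x < π := by rw [abs_of_pos hx] at h; exact h
    have h3 := Real.sin_pos_of_pos_of_lt_pi hx h2
    linarith

lemma telescope (M : ℕ) (α : ℝ) :
    2 * Real.sin (α/2) * ∑ i ∈ Finset.range M, Real.cos ((i+1)*α)
      = Real.sin ((M + 1/2)*α) - Real.sin (α/2) := by
  have h : ∀ i : ℕ, 2 * Real.sin (α/2) * Real.cos ((i+1)*α)
      = Real.sin (((i+1 : ℕ) + 1/2)*α) - Real.sin ((i + 1/2)*α) := by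
    intro i
    rw [Real.sin_sub_sin]
    push_cast
    rw [show (((i:ℝ)+1+1/2)*α - ((i+1/2)*α))/2 = α/2 by ring,
        show (((i:ℝ)+1+1/2)*α + ((i+1/2)*α))/2 = ((i:ℝ)+1)*α by ring]
  calc 2 * Real.sin (α/2) * ∑ i ∈ Finset.range M, Real.cos ((i+1)*α)
      = ∑ i ∈ Finset.range M, (Real.sin (((i+1:ℕ) + 1/2)*α) - Real.sin (((i:ℕ) + 1/2)*α)) := by
        rw [Finset.mul_sum]; exact Finset.sum_congr rfl (fun i _ => h i)
    _ = Real.sin (((M:ℕ) + 1/2)*α) - Real.sin (((0:ℕ) + 1/2)*α) :=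
        Finset.sum_range_sub (fun i : ℕ => Real.sin (((i:ℕ) + 1/2)*α)) M
    _ = Real.sin ((M + 1/2)*α) - Real.sin (α/2) := by
        norm_num [show ((0:ℕ):ℝ) + 1/2 = 1/2 from by norm_num]
        rw [show (1:ℝ)/2*α = α/2 by ring]

lemma sum_cos_eval (m : ℕ) (t : ℝ) (h1 : Real.sin (t*π/(m+1)/2) ≠ 0)
    (h2 : Real.sin (t*π) = 0) :
    ∑ i ∈ Finset.range m, Real.cos ((i+1)*(t*π/(m+1))) = (-(Real.cos (t*π)) - 1)/2 := by
  have hm1 : (m:ℝ) + 1 ≠ 0 := by positivity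
  have key := telescope m (t*π/(m+1))
  have harg : ((m:ℝ) + 1/2)*(t*π/(m+1)) = t*π - t*π/(m+1)/2 := by
    field_simp; ring
  rw [harg, Real.sin_sub, h2, zero_mul, zero_sub] at key
  have h3 : 2 * Real.sin (t*π/(m+1)/2) * ∑ i ∈ Finset.range m, Real.cos ((i+1)*(t*π/(m+1)))
      = 2 * Real.sin (t*π/(m+1)/2) * ((-(Real.cos (t*π)) - 1)/2) := by
    rw [key]; ring
  exact mul_left_cancel₀ (by simpa using mul_ne_zero two_ne_zero h1) h3

lemma orth (m : ℕ) (k l : Fin m) :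
    ∑ i : Fin m, Real.sin (((i.val:ℝ)+1)*((k.val:ℝ)+1)*π/(m+1)) *
        Real.sin (((i.val:ℝ)+1)*((l.val:ℝ)+1)*π/(m+1))
      = if k = l then ((m:ℝ)+1)/2 else 0 := by
  have hm1 : (0:ℝ) < (m:ℝ) + 1 := by positivity
  have hmne : ((m:ℝ)+1) ≠ 0 := ne_of_gt hm1
  obtain ⟨t1, ht1⟩ : ∃ t : ℝ, t = (k.val:ℝ) - (l.val:ℝ) := ⟨_, rfl⟩
  obtain ⟨t2, ht2⟩ : ∃ t : ℝ, t = (k.val:ℝ) + (l.val:ℝ) + 2 := ⟨_, rfl⟩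
  have hterm : ∀ i : ℕ,
      Real.sin (((i:ℝ)+1)*((k.val:ℝ)+1)*π/(m+1)) * Real.sin (((i:ℝ)+1)*((l.val:ℝ)+1)*π/(m+1))
        = (Real.cos (((i:ℝ)+1)*(t1*π/(m+1))) - Real.cos (((i:ℝ)+1)*(t2*π/(m+1))))/2 := by
    intro i
    rw [Real.cos_sub_cos,
        show (((i:ℝ)+1)*(t1*π/(m+1)) + ((i:ℝ)+1)*(t2*π/(m+1)))/2
            = ((i:ℝ)+1)*((k.val:ℝ)+1)*π/(m+1) by rw [ht1, ht2]; ring,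
        show (((i:ℝ)+1)*(t1*π/(m+1)) - ((i:ℝ)+1)*(t2*π/(m+1)))/2
            = -(((i:ℝ)+1)*((l.val:ℝ)+1)*π/(m+1)) by rw [ht1, ht2]; ring,
        Real.sin_neg]
    ring
  have hsum : ∑ i : Fin m, Real.sin (((i.val:ℝ)+1)*((k.val:ℝ)+1)*π/(m+1)) *
        Real.sin (((i.val:ℝ)+1)*((l.val:ℝ)+1)*π/(m+1))
      = ((∑ i ∈ Finset.range m, Real.cos (((i:ℝ)+1)*(t1*π/(m+1))))
         - ∑ i ∈ Finset.range m, Real.cos (((i:ℝ)+1)*(t2*π/(m+1))))/2 := by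
    rw [Fin.sum_univ_eq_sum_range
      (fun i : ℕ => Real.sin (((i:ℝ)+1)*((k.val:ℝ)+1)*π/(m+1)) *
        Real.sin (((i:ℝ)+1)*((l.val:ℝ)+1)*π/(m+1)))]
    rw [Finset.sum_congr rfl (fun i _ => hterm i), ← Finset.sum_div, Finset.sum_sub_distrib]
  rw [hsum]
  have hk : (k.val:ℝ) < m := by exact_mod_cast k.isLt
  have hl : (l.val:ℝ) < m := by exact_mod_cast l.isLt
  have ht2pos : 0 < t2 := by rw [ht2]; positivity
  have h2a : Real.sin (t2*π/(m+1)/2) ≠ 0 := by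
    apply ne_of_gt
    apply Real.sin_pos_of_pos_of_lt_pi
    · positivity
    · rw [show t2*π/(m+1)/2 = t2*(π/((m+1)*2)) by field_simp]
      have ht2lt : t2 < 2*((m:ℝ)+1) := by rw [ht2]; nlinarith
      calc t2 * (π/((m+1)*2)) < (2*((m:ℝ)+1)) * (π/((m+1)*2)) := by
            apply mul_lt_mul_of_pos_right ht2lt; positivity
        _ = π := by field_simp
  have h2b : Real.sin (t2*π) = 0 := by
    rw [ht2, show ((k.val:ℝ) + (l.val:ℝ) + 2) = ((k.val + l.val + 2 : ℕ):ℝ) by push_cast; ring]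
    exact Real.sin_nat_mul_pi _
  have hC2 := sum_cos_eval m t2 h2a h2b
  by_cases hkl : k = l
  · subst hkl
    have ht10 : t1 = 0 := by rw [ht1]; ring
    have hC1 : ∑ i ∈ Finset.range m, Real.cos (((i:ℝ)+1)*(t1*π/(m+1))) = m := by
      have heq : ∀ i ∈ Finset.range m, Real.cos (((i:ℝ)+1)*(t1*π/(m+1))) = 1 := by
        intro i _
        rw [ht10, zero_mul, zero_div, mul_zero, Real.cos_zero]
      rw [Finset.sum_congr rfl heq, Finset.sum_const, Finset.card_range, nsmul_eq_mul, mul_one]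
    have hcos2 : Real.cos (t2*π) = 1 := by
      rw [ht2, show ((k.val:ℝ) + (k.val:ℝ) + 2)*π = ((k.val+1 : ℕ):ℝ)*(2*π) by push_cast; ring]
      exact Real.cos_nat_mul_two_pi _
    rw [hC1, hC2, hcos2, if_pos rfl]
    ring
  · rw [if_neg hkl]
    have hne : (k.val:ℝ) ≠ (l.val:ℝ) := by
      exact_mod_cast fun h => hkl (Fin.ext h)
    have ht1ne : t1 ≠ 0 := by rw [ht1]; exact sub_ne_zero.mpr hne
    have h1a : Real.sin (t1*π/(m+1)/2) ≠ 0 := by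
      apply sin_ne_zero_of_abs_lt_pi
      · positivity
      · rw [show t1*π/(m+1)/2 = t1*(π/((m+1)*2)) by field_simp, abs_mul,
            abs_of_pos (by positivity : (0:ℝ) < π/((m+1)*2))]
        have habs : |t1| < (m:ℝ)+1 := by
          rw [ht1, abs_lt]
          constructor <;> nlinarith [(Nat.cast_nonneg k.val : (0:ℝ) ≤ k.val),
            (Nat.cast_nonneg l.val : (0:ℝ) ≤ l.val)]
        calc |t1| * (π/((m+1)*2)) < ((m:ℝ)+1) * (π/((m+1)*2)) := by
              apply mul_lt_mul_of_pos_right habs; positivity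
          _ = π/2 := by field_simp
          _ < π := by linarith [Real.pi_pos]
    have h1b : Real.sin (t1*π) = 0 := by
      rw [ht1, show ((k.val:ℝ) - (l.val:ℝ))*π = ((((k.val:ℤ) - (l.val:ℤ)):ℤ):ℝ)*π by
        push_cast; ring]
      exact Real.sin_int_mul_pi ((k.val:ℤ) - (l.val:ℤ))
    have hC1 := sum_cos_eval m t1 h1a h1b
    have hcos12 : Real.cos (t1*π) = Real.cos (t2*π) := by
      rw [show t2*π = t1*π + ((l.val+1 : ℕ):ℝ)*(2*π) by rw [ht1, ht2]; push_cast; ring]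
      exact (Real.cos_add_nat_mul_two_pi _ _).symm
    rw [hC1, hC2, hcos12]
    ring

/-- The basic sine entry. -/
def sN (m k a : ℕ) : ℝ := Real.sin ((a:ℝ)*((k:ℝ)+1)*π/((m:ℝ)+1))

lemma sN_zero (m k : ℕ) : sN m k 0 = 0 := by simp [sN]

lemma sN_top (m k : ℕ) : sN m k (m+1) = 0 := by
  unfold sN
  rw [show (((m+1:ℕ)):ℝ)*((k:ℝ)+1)*π/((m:ℝ)+1) = ((k+1:ℕ):ℝ)*π by
    have h : ((m:ℝ)+1) ≠ 0 := by positivity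
    field_simp
    push_cast
    ring]
  exact Real.sin_nat_mul_pi (k+1)

lemma sN_symm (m a b : ℕ) : sN m a (b+1) = sN m b (a+1) := by
  unfold sN
  congr 1
  push_cast
  ring

lemma sN_rec (m k a : ℕ) : sN m k a + sN m k (a+2)
    = 2 * Real.cos (((k:ℝ)+1)*π/((m:ℝ)+1)) * sN m k (a+1) := by
  unfold sN
  have h := Real.two_mul_sin_mul_cos (((a+1:ℕ):ℝ)*((k:ℝ)+1)*π/((m:ℝ)+1))
      (((k:ℝ)+1)*π/((m:ℝ)+1))
  rw [show ((a+1:ℕ):ℝ)*((k:ℝ)+1)*π/((m:ℝ)+1) - ((k:ℝ)+1)*π/((m:ℝ)+1)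
        = ((a:ℕ):ℝ)*((k:ℝ)+1)*π/((m:ℝ)+1) by push_cast; ring,
      show ((a+1:ℕ):ℝ)*((k:ℝ)+1)*π/((m:ℝ)+1) + ((k:ℝ)+1)*π/((m:ℝ)+1)
        = ((a+2:ℕ):ℝ)*((k:ℝ)+1)*π/((m:ℝ)+1) by push_cast; ring] at h
  rw [← h]
  ring

lemma orth' (m : ℕ) (k l : Fin m) :
    ∑ i : Fin m, sN m k.val (i.val+1) * sN m l.val (i.val+1)
      = if k = l then ((m:ℝ)+1)/2 else 0 := by
  rw [← orth m k l]
  apply Finset.sum_congr rfl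
  intro i _
  unfold sN
  congr 2 <;> · push_cast; ring

lemma eig1 (m : ℕ) (k i : Fin m) :
    ∑ j : Fin m, (if (i.val + 1 = j.val ∨ j.val + 1 = i.val) then (1:ℝ) else 0) *
        sN m k.val (j.val+1)
      = 2 * Real.cos (((k.val:ℝ)+1)*π/((m:ℝ)+1)) * sN m k.val (i.val+1) := by
  have hsplit : ∀ j : Fin m,
      (if (i.val + 1 = j.val ∨ j.val + 1 = i.val) then (1:ℝ) else 0) * sN m k.val (j.val+1)
        = (if i.val + 1 = j.val then (1:ℝ) else 0) * sN m k.val (j.val+1)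
          + (if j.val + 1 = i.val then (1:ℝ) else 0) * sN m k.val (j.val+1) := by
    intro j
    by_cases h1 : i.val + 1 = j.val <;> by_cases h2 : j.val + 1 = i.val
    · omega
    · simp [h1, h2]
    · simp [h1, h2]
    · simp [h1, h2]
  rw [Finset.sum_congr rfl (fun j _ => hsplit j), Finset.sum_add_distrib]
  have hright : ∑ j : Fin m, (if i.val + 1 = j.val then (1:ℝ) else 0) * sN m k.val (j.val+1)
      = sN m k.val (i.val+2) := by
    by_cases h : i.val + 1 < m
    · rw [Finset.sum_eq_single (⟨i.val+1, h⟩ : Fin m)]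
      · simp
      · intro j _ hj
        rw [if_neg, zero_mul]
        intro hc
        exact hj (Fin.ext hc.symm)
      · intro hni
        exact absurd (Finset.mem_univ _) hni
    · rw [Finset.sum_eq_zero, show i.val + 2 = m + 1 by omega, sN_top]
      intro j _
      rw [if_neg (by omega : ¬ i.val + 1 = j.val), zero_mul]
  have hleft : ∑ j : Fin m, (if j.val + 1 = i.val then (1:ℝ) else 0) * sN m k.val (j.val+1)
      = sN m k.val i.val := by
    rcases Nat.eq_zero_or_pos i.val with hi0 | hip
    · rw [Finset.sum_eq_zero, hi0, sN_zero]
      intro j _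
      rw [if_neg (by omega : ¬ j.val + 1 = i.val), zero_mul]
    · have hlt : i.val - 1 < m := by omega
      rw [Finset.sum_eq_single (⟨i.val - 1, hlt⟩ : Fin m)]
      · rw [if_pos (by simp; omega)]
        rw [one_mul, show (i.val - 1) + 1 = i.val by omega]
      · intro j _ hj
        rw [if_neg, zero_mul]
        intro hc
        exact hj (Fin.ext (by simp; omega))
      · intro hni
        exact absurd (Finset.mem_univ _) hni
  rw [hright, hleft, ← sN_rec m k.val i.val]
  ring

lemma ite_or_split {P Q : Prop} [Decidable P] [Decidable Q] (h : ¬(P ∧ Q)) :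
    (if P ∨ Q then (1:ℝ) else 0) = (if P then (1:ℝ) else 0) + (if Q then (1:ℝ) else 0) := by
  by_cases hP : P <;> by_cases hQ : Q <;> simp_all

lemma ite_and_mul {P Q : Prop} [Decidable P] [Decidable Q] :
    (if P ∧ Q then (1:ℝ) else 0) = (if P then (1:ℝ) else 0) * (if Q then (1:ℝ) else 0) := by
  by_cases hP : P <;> by_cases hQ : Q <;> simp_all

lemma collapse {n : ℕ} (c : Fin n) (f : Fin n → ℝ) :
    ∑ j : Fin n, (if c = j then (1:ℝ) else 0) * f j = f c := by
  simp only [ite_mul, one_mul, zero_mul]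
  rw [Finset.sum_ite_eq]
  simp

/-- eigenvalue is nonzero -/
lemma eig_ne_zero (m n : ℕ) (hgcd : Nat.gcd (m + 1) (n + 1) = 1) (k : Fin m) (l : Fin n) :
    2 * Real.cos (((k.val:ℝ)+1)*π/((m:ℝ)+1)) + 2 * Real.cos (((l.val:ℝ)+1)*π/((n:ℝ)+1)) ≠ 0 := by
  intro h
  have hπ := Real.pi_pos
  have hm0 : ((m:ℝ)+1) ≠ 0 := by positivity
  have hn0 : ((n:ℝ)+1) ≠ 0 := by positivity
  have hkm : (k.val:ℝ) < m := by exact_mod_cast k.isLt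
  have hln : (l.val:ℝ) < n := by exact_mod_cast l.isLt
  obtain ⟨a, ha⟩ : ∃ t : ℝ, t = ((k.val:ℝ)+1)*π/((m:ℝ)+1) := ⟨_, rfl⟩
  obtain ⟨b, hb⟩ : ∃ t : ℝ, t = ((l.val:ℝ)+1)*π/((n:ℝ)+1) := ⟨_, rfl⟩
  have ha0 : 0 ≤ a := by rw [ha]; positivity
  have hb0 : 0 ≤ b := by rw [hb]; positivity
  have ha1 : a ≤ π := by
    rw [ha, div_le_iff₀ (by positivity)]
    nlinarith
  have hb1 : b ≤ π := by
    rw [hb, div_le_iff₀ (by positivity)]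
    nlinarith
  have hcos : Real.cos a = Real.cos (π - b) := by
    rw [Real.cos_pi_sub, ha, hb]
    linarith
  have hab : a = π - b :=
    Real.injOn_cos ⟨ha0, ha1⟩ ⟨by linarith, by linarith⟩ hcos
  have hsum : a + b = π := by linarith
  -- clear denominators
  have hA : (((k.val:ℝ)+1)*π/((m:ℝ)+1)) * ((m:ℝ)+1) = ((k.val:ℝ)+1)*π :=
    div_mul_cancel₀ _ hm0
  have hB : (((l.val:ℝ)+1)*π/((n:ℝ)+1)) * ((n:ℝ)+1) = ((l.val:ℝ)+1)*π :=
    div_mul_cancel₀ _ hn0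
  have hr : ((k.val:ℝ)+1)*π*((n:ℝ)+1) + ((l.val:ℝ)+1)*π*((m:ℝ)+1)
      = π*(((m:ℝ)+1)*((n:ℝ)+1)) := by
    rw [← hA, ← hB, ha.symm, hb.symm]
    rw [← hsum]
    ring
  have h3 : (((k.val+1)*(n+1) + (l.val+1)*(m+1) : ℕ):ℝ) * π = (((m+1)*(n+1):ℕ):ℝ) * π := by
    push_cast
    linarith [hr]
  have h4 := mul_right_cancel₀ (ne_of_gt hπ) h3
  have hN : (k.val+1)*(n+1) + (l.val+1)*(m+1) = (m+1)*(n+1) := by exact_mod_cast h4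
  have hd : (m+1) ∣ (k.val+1)*(n+1) := by
    have h5 : (k.val+1)*(n+1) = (m+1)*(n+1) - (l.val+1)*(m+1) := by omega
    rw [h5]
    exact Nat.dvd_sub ⟨n+1, rfl⟩ ⟨l.val+1, mul_comm _ _⟩
  have hcop : Nat.Coprime (m+1) (n+1) := hgcd
  have hk1 : (m+1) ∣ (k.val+1) := hcop.dvd_of_dvd_mul_right hd
  have := Nat.le_of_dvd (by omega) hk1
  have := k.isLt
  omega

/-- the sine eigenvector matrix on the product -/
def Smat (m n : ℕ) : Matrix (Fin m × Fin n) (Fin m × Fin n) ℝ :=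
  fun p q => sN m q.1.val (p.1.val+1) * sN n q.2.val (p.2.val+1)

def dval (m n : ℕ) (q : Fin m × Fin n) : ℝ :=
  2 * Real.cos (((q.1.val:ℝ)+1)*π/((m:ℝ)+1)) + 2 * Real.cos (((q.2.val:ℝ)+1)*π/((n:ℝ)+1))

end GridAux

end

/-- Adjacency matrix of the grid (rook-step) graph on {1,…,m} × {1,…,n},
represented on `Fin m × Fin n`. -/
def gridAdj (m n : ℕ) : Matrix (Fin m × Fin n) (Fin m × Fin n) ℝ :=
  fun p q =>
    if ((p.1.val + 1 = q.1.val ∨ q.1.val + 1 = p.1.val) ∧ p.2 = q.2) ∨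
       (p.1 = q.1 ∧ (p.2.val + 1 = q.2.val ∨ q.2.val + 1 = p.2.val)) then 1 else 0

namespace GridAux

lemma SS (m n : ℕ) : Smat m n * Smat m n
    = ((((m:ℝ)+1)*((n:ℝ)+1)/4)) • (1 : Matrix (Fin m × Fin n) (Fin m × Fin n) ℝ) := by
  ext p q
  rw [Matrix.mul_apply]
  have hterm : ∀ r : Fin m × Fin n, Smat m n p r * Smat m n r q
      = (sN m p.1.val (r.1.val+1) * sN m q.1.val (r.1.val+1))
        * (sN n p.2.val (r.2.val+1) * sN n q.2.val (r.2.val+1)) := by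
    intro r
    unfold Smat
    rw [sN_symm m r.1.val p.1.val, sN_symm n r.2.val p.2.val]
    ring
  rw [Finset.sum_congr rfl (fun r _ => hterm r), Fintype.sum_prod_type]
  dsimp only
  rw [← Finset.sum_mul_sum, orth' m p.1 q.1, orth' n p.2 q.2,
      Matrix.smul_apply, Matrix.one_apply]
  by_cases h1 : p.1 = q.1 <;> by_cases h2 : p.2 = q.2
  · rw [if_pos h1, if_pos h2, if_pos (Prod.ext_iff.mpr ⟨h1, h2⟩), smul_eq_mul, mul_one]
    ring
  · rw [if_pos h1, if_neg h2, if_neg (fun hc => h2 (congrArg Prod.snd hc)), mul_zero, smul_zero]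
  · rw [if_neg h1, if_pos h2, if_neg (fun hc => h1 (congrArg Prod.fst hc)), zero_mul, smul_zero]
  · rw [if_neg h1, if_neg h2, if_neg (fun hc => h1 (congrArg Prod.fst hc)), zero_mul, smul_zero]

lemma AS (m n : ℕ) : gridAdj m n * Smat m n = Smat m n * Matrix.diagonal (dval m n) := by
  ext p q
  rw [Matrix.mul_apply, Matrix.mul_diagonal]
  have hterm : ∀ r : Fin m × Fin n, gridAdj m n p r * Smat m n r q
      = ((if (p.1.val + 1 = r.1.val ∨ r.1.val + 1 = p.1.val) then (1:ℝ) else 0)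
          * sN m q.1.val (r.1.val+1))
        * ((if p.2 = r.2 then (1:ℝ) else 0) * sN n q.2.val (r.2.val+1))
      + ((if p.1 = r.1 then (1:ℝ) else 0) * sN m q.1.val (r.1.val+1))
        * ((if (p.2.val + 1 = r.2.val ∨ r.2.val + 1 = p.2.val) then (1:ℝ) else 0)
          * sN n q.2.val (r.2.val+1)) := by
    intro r
    unfold gridAdj Smat
    rw [ite_or_split, ite_and_mul, ite_and_mul]
    · ring
    · rintro ⟨⟨h1, h2⟩, ⟨h3, h4⟩⟩
      have := congrArg Fin.val h3
      omega
  rw [Finset.sum_congr rfl (fun r _ => hterm r), Finset.sum_add_distrib,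
      Fintype.sum_prod_type, Fintype.sum_prod_type]
  dsimp only
  have e1 : ∑ i : Fin m, ∑ j : Fin n,
      ((if (p.1.val + 1 = i.val ∨ i.val + 1 = p.1.val) then (1:ℝ) else 0)
        * sN m q.1.val (i.val+1))
      * ((if p.2 = j then (1:ℝ) else 0) * sN n q.2.val (j.val+1))
      = (2 * Real.cos (((q.1.val:ℝ)+1)*π/((m:ℝ)+1)) * sN m q.1.val (p.1.val+1))
        * sN n q.2.val (p.2.val+1) := by
    rw [← Finset.sum_mul_sum, eig1 m q.1 p.1, collapse p.2]
  have e2 : ∑ i : Fin m, ∑ j : Fin n,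
      ((if p.1 = i then (1:ℝ) else 0) * sN m q.1.val (i.val+1))
      * ((if (p.2.val + 1 = j.val ∨ j.val + 1 = p.2.val) then (1:ℝ) else 0)
        * sN n q.2.val (j.val+1))
      = sN m q.1.val (p.1.val+1)
        * (2 * Real.cos (((q.2.val:ℝ)+1)*π/((n:ℝ)+1)) * sN n q.2.val (p.2.val+1)) := by
    rw [← Finset.sum_mul_sum, eig1 n q.2 p.2, collapse p.1]
  rw [e1, e2]
  unfold Smat dval
  ring

end GridAux

theorem stmt_3 (m n : ℕ) (hm : 1 ≤ m) (hn : 1 ≤ n)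
    (hgcd : Nat.gcd (m + 1) (n + 1) = 1) :
    IsUnit (gridAdj m n) := by
  classical
  have hSS := GridAux.SS m n
  have hAS := GridAux.AS m n
  have hc : (0:ℝ) < ((m:ℝ)+1)*((n:ℝ)+1)/4 := by positivity
  have hdetS : (GridAux.Smat m n).det ≠ 0 := by
    intro h0
    have h1 : (GridAux.Smat m n).det * (GridAux.Smat m n).det
        = (((m:ℝ)+1)*((n:ℝ)+1)/4) ^ (Fintype.card (Fin m × Fin n)) := by
      rw [← Matrix.det_mul, hSS, Matrix.det_smul, Matrix.det_one, mul_one]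
    rw [h0, mul_zero] at h1
    exact (pow_ne_zero _ (ne_of_gt hc)) h1.symm
  have hdetD : (Matrix.diagonal (GridAux.dval m n)).det ≠ 0 := by
    rw [Matrix.det_diagonal]
    apply Finset.prod_ne_zero_iff.mpr
    intro q _
    exact GridAux.eig_ne_zero m n hgcd q.1 q.2
  have hdet : (gridAdj m n).det ≠ 0 := by
    have h2 : (gridAdj m n).det * (GridAux.Smat m n).det
        = (GridAux.Smat m n).det * (Matrix.diagonal (GridAux.dval m n)).det := by
      rw [← Matrix.det_mul, ← Matrix.det_mul, hAS]
    intro h0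
    rw [h0, zero_mul] at h2
    exact hdetD (mul_left_cancel₀ hdetS (by rw [← h2, mul_zero]))
  rw [Matrix.isUnit_iff_isUnit_det]
  exact isUnit_iff_ne_zero.mpr hdet
end

section
/- Fix integers m, n ≥ 1 with mn even and gcd(m+1, n+1) = 1. Let R = {1,…,m} × {1,…,n}, let A = {(i,j) ∈ R : i+j even} and S = R \ A. Define T: ℝ^S → ℝ^A by (Tx)(i,j) = Σ x(i',j'), the sum over (i',j') ∈ {(i-1,j),(i+1,j),(i,j-1),(i,j+1)} ∩ S. Then T is a bijective linear map. -/
/-- 1D odd-periodic extension operator: fold `i` into `[0,P]` with a sign. -/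
private def Efun (P : ℤ) (b : ℤ → ℝ) (i : ℤ) : ℝ :=
  if i % (2*P) ≤ P then b (i % (2*P)) else - b (2*P - i % (2*P))

private lemma Efun_zero (P : ℤ) (b : ℤ → ℝ) (h : ∀ t, b t = 0) (i : ℤ) : Efun P b i = 0 := by
  unfold Efun; split <;> simp [h]

private lemma Efun_mod (P : ℤ) (b : ℤ → ℝ) {i i' : ℤ} (h : i % (2*P) = i' % (2*P)) :
    Efun P b i = Efun P b i' := by unfold Efun; rw [h]

private lemma Efun_eq (P : ℤ) (b : ℤ → ℝ) {i : ℤ} (hP : 1 ≤ P) (h0 : 0 ≤ i) (hiP : i ≤ P) :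
    Efun P b i = b i := by
  have h2 : i % (2*P) = i := Int.emod_eq_of_lt h0 (by omega)
  unfold Efun
  rw [h2, if_pos hiP]

private lemma Efun_neg (P : ℤ) (b : ℤ → ℝ) (hP : 1 ≤ P) (hb0 : b 0 = 0) (hbP : b P = 0)
    (i : ℤ) : Efun P b (-i) = - Efun P b i := by
  have h2P : (0:ℤ) < 2*P := by omega
  have ht0 : 0 ≤ i % (2*P) := Int.emod_nonneg i (by omega)
  have ht1 : i % (2*P) < 2*P := Int.emod_lt_of_pos i h2P
  have h1 : Int.ModEq (2*P) i (i % (2*P)) := (Int.emod_emod_of_dvd i dvd_rfl).symm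
  have htot : Int.ModEq (2*P) (-i) (2*P - i % (2*P)) :=
    h1.neg.trans (Int.ModEq.symm (Int.modEq_iff_dvd.mpr ⟨-1, by ring⟩))
  by_cases hc : i % (2*P) = 0
  · have hni : (-i) % (2*P) = 0 := by
      have h' : (-i) % (2*P) = (2*P - i % (2*P)) % (2*P) := htot
      rw [h', hc]
      simp
    unfold Efun
    rw [hni, hc]
    simp only [if_pos (by omega : (0:ℤ) ≤ P), hb0]
    ring
  · have hval : (-i) % (2*P) = 2*P - i % (2*P) := by
      have h' : (-i) % (2*P) = (2*P - i % (2*P)) % (2*P) := htot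
      rw [h', Int.emod_eq_of_lt (by omega) (by omega)]
    unfold Efun
    rw [hval]
    by_cases h2 : i % (2*P) ≤ P
    · by_cases h3 : 2*P - i % (2*P) ≤ P
      · have hP' : i % (2*P) = P := by omega
        rw [if_pos h3, if_pos h2, hP']
        rw [show 2*P - P = P by ring, hbP]
        simp
      · rw [if_neg h3, if_pos h2]
        rw [show 2*P - (2*P - i % (2*P)) = i % (2*P) by ring]
    · rw [if_pos (by omega), if_neg h2]
      simp

private lemma Efun_fold (P : ℤ) (hP : 1 ≤ P) (i : ℤ) :
    ∃ k ε, 0 ≤ k ∧ k ≤ P ∧ (ε = (1:ℝ) ∨ ε = -1) ∧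
      ∀ b : ℤ → ℝ, b 0 = 0 → b P = 0 →
        Efun P b i = ε * Efun P b k ∧
        ((Efun P b (i+1) = ε * Efun P b (k+1) ∧ Efun P b (i-1) = ε * Efun P b (k-1)) ∨
         (Efun P b (i+1) = ε * Efun P b (k-1) ∧ Efun P b (i-1) = ε * Efun P b (k+1))) := by
  have h2P : (0:ℤ) < 2*P := by omega
  have ht0 : 0 ≤ i % (2*P) := Int.emod_nonneg i (by omega)
  have ht1 : i % (2*P) < 2*P := Int.emod_lt_of_pos i h2P
  have h1 : Int.ModEq (2*P) i (i % (2*P)) := (Int.emod_emod_of_dvd i dvd_rfl).symm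
  by_cases hc : i % (2*P) ≤ P
  · refine ⟨i % (2*P), 1, ht0, hc, Or.inl rfl, ?_⟩
    intro b hb0 hbP
    have hmk : ∀ d : ℤ, Efun P b (i + d) = Efun P b (i % (2*P) + d) := by
      intro d
      exact Efun_mod P b (h1.add_right d)
    have h0' : Efun P b i = Efun P b (i % (2*P)) := Efun_mod P b h1
    refine ⟨by rw [h0']; ring, Or.inl ⟨?_, ?_⟩⟩
    · rw [hmk 1]; ring
    · rw [show i - 1 = i + (-1) by ring, hmk (-1), show i % (2*P) + (-1) = i % (2*P) - 1 by ring]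
      ring
  · refine ⟨2*P - i % (2*P), -1, by omega, by omega, Or.inr rfl, ?_⟩
    intro b hb0 hbP
    set k := 2*P - i % (2*P) with hk
    have hmod : Int.ModEq (2*P) i (-k) := by
      refine h1.trans (Int.modEq_iff_dvd.mpr ⟨-1, by rw [hk]; ring⟩)
    have hma : Efun P b i = Efun P b (-k) := Efun_mod P b hmod
    have hmb : Efun P b (i+1) = Efun P b (-(k-1)) := by
      have := hmod.add_right 1
      refine (Efun_mod P b ?_)
      have h' : (-k + 1 : ℤ) = -(k-1) := by ring
      rw [← h']
      exact this
    have hmc : Efun P b (i-1) = Efun P b (-(k+1)) := by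
      have := hmod.add_right (-1)
      refine (Efun_mod P b ?_)
      have h' : (-k + (-1) : ℤ) = -(k+1) := by ring
      rw [← h']
      exact (show Int.ModEq (2*P) (i - 1) (-k + (-1)) by
        have h'' : i + (-1) = i - 1 := by ring
        rw [← h'']; exact this)
    constructor
    · rw [hma, Efun_neg P b hP hb0 hbP]; ring
    · right
      constructor
      · rw [hmb, Efun_neg P b hP hb0 hbP]; ring
      · rw [hmc, Efun_neg P b hP hb0 hbP]; ring
private def Ffun (P1 P2 : ℤ) (Y : ℤ → ℤ → ℝ) (i j : ℤ) : ℝ :=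
  Efun P1 (fun i' => Efun P2 (Y i') j) i

private def Gfun (P1 P2 : ℤ) (Y : ℤ → ℤ → ℝ) (j i : ℤ) : ℝ :=
  Efun P2 (fun j' => Efun P1 (fun i' => Y i' j') i) j

private lemma FG (P1 P2 : ℤ) (Y : ℤ → ℤ → ℝ) (i j : ℤ) :
    Ffun P1 P2 Y i j = Gfun P1 P2 Y j i := by
  unfold Ffun Gfun Efun
  by_cases h1 : i % (2*P1) ≤ P1 <;> by_cases h2 : j % (2*P2) ≤ P2 <;> simp [h1, h2]

private noncomputable def gfun (P1 P2 : ℤ) (Y : ℤ → ℤ → ℝ) (i j : ℤ) : ℝ :=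
  (-1:ℝ)^j * Ffun P1 P2 Y i j

private noncomputable def cfun (P1 P2 : ℤ) (Y : ℤ → ℤ → ℝ) (v : ℤ) : ℝ :=
  gfun P1 P2 Y (v+1) 0 - gfun P1 P2 Y v 1

private def qpos (c : ℤ → ℝ) : ℕ → ℝ
  | 0 => 0
  | 1 => 0
  | (k+2) => qpos c k + c ((k:ℤ)+1)

private def qneg (c : ℤ → ℝ) : ℕ → ℝ
  | 0 => 0
  | 1 => - c 0
  | (k+2) => qneg c k - c (-((k:ℤ)+1))

private def qfun (c : ℤ → ℝ) (v : ℤ) : ℝ :=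
  if 0 ≤ v then qpos c v.toNat else qneg c (-v).toNat

private lemma qfun_step (c : ℤ → ℝ) (v : ℤ) : qfun c (v+1) - qfun c (v-1) = c v := by
  rcases lt_trichotomy v 0 with h | h | h
  · by_cases h1 : v = -1
    · subst h1
      show qfun c 0 - qfun c (-2) = c (-1)
      rw [show qfun c 0 = qpos c (0:ℤ).toNat from if_pos le_rfl,
          show qfun c (-2) = qneg c (-(-2:ℤ)).toNat from if_neg (by omega)]
      norm_num
      show (qpos c 0 : ℝ) - qneg c 2 = c (-1)
      simp [qpos, qneg]
    · have hv1 : qfun c (v+1) = qneg c (-(v+1)).toNat := if_neg (by omega)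
      have hv2 : qfun c (v-1) = qneg c (-(v-1)).toNat := if_neg (by omega)
      have hk : (-(v-1)).toNat = (-(v+1)).toNat + 2 := by omega
      rw [hv1, hv2, hk]
      rw [show qneg c ((-(v+1)).toNat + 2) = qneg c (-(v+1)).toNat - c (-(((-(v+1)).toNat : ℤ)+1)) from rfl]
      rw [show (-((((-(v+1)).toNat : ℤ))+1)) = v by omega]
      ring
  · subst h
    show qfun c 1 - qfun c (-1) = c 0
    rw [show qfun c 1 = qpos c (1:ℤ).toNat from if_pos (by omega),
        show qfun c (-1) = qneg c (-(-1:ℤ)).toNat from if_neg (by omega)]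
    norm_num
    show (qpos c 1 : ℝ) - qneg c 1 = c 0
    simp [qpos, qneg]
  · have hv1 : qfun c (v+1) = qpos c (v+1).toNat := if_pos (by omega)
    have hv2 : qfun c (v-1) = qpos c (v-1).toNat := if_pos (by omega)
    have hk : (v+1).toNat = (v-1).toNat + 2 := by omega
    rw [hv1, hv2, hk]
    rw [show qpos c ((v-1).toNat + 2) = qpos c (v-1).toNat + c ((((v-1).toNat : ℤ))+1) from rfl]
    rw [show ((((v-1).toNat : ℤ))+1) = v by omega]
    ring
private lemma main_inj (P1 P2 : ℤ) (hP1 : 1 ≤ P1) (hP2 : 1 ≤ P2)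
    (hco : IsCoprime P1 P2) (Y : ℤ → ℤ → ℝ)
    (hb1 : ∀ i j, i ≤ 0 → Y i j = 0)
    (hb2 : ∀ i j, P1 ≤ i → Y i j = 0)
    (hb3 : ∀ i j, j ≤ 0 → Y i j = 0)
    (hb4 : ∀ i j, P2 ≤ j → Y i j = 0)
    (heq : ∀ i j : ℤ, 1 ≤ i → i ≤ P1 - 1 → 1 ≤ j → j ≤ P2 - 1 →
      Y (i-1) j + Y (i+1) j + Y i (j-1) + Y i (j+1) = 0) :
    ∀ i j, Y i j = 0 := by
  have bz1 : ∀ j, Efun P2 (Y 0) j = 0 := fun j => Efun_zero _ _ (fun t => hb1 0 t le_rfl) j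
  have bz2 : ∀ j, Efun P2 (Y P1) j = 0 := fun j => Efun_zero _ _ (fun t => hb2 P1 t le_rfl) j
  have bz3 : ∀ i, Efun P1 (fun i' => Y i' 0) i = 0 :=
    fun i => Efun_zero _ _ (fun t => hb3 t 0 le_rfl) i
  have bz4 : ∀ i, Efun P1 (fun i' => Y i' P2) i = 0 :=
    fun i => Efun_zero _ _ (fun t => hb4 t P2 le_rfl) i
  -- boundary zeros of F
  have hF0j : ∀ j, Ffun P1 P2 Y 0 j = 0 := by
    intro j
    have h := Efun_eq P1 (fun i' => Efun P2 (Y i') j) hP1 (le_refl (0:ℤ)) (by omega)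
    rw [show Ffun P1 P2 Y 0 j = Efun P1 (fun i' => Efun P2 (Y i') j) 0 from rfl, h]
    exact bz1 j
  have hFP1j : ∀ j, Ffun P1 P2 Y P1 j = 0 := by
    intro j
    have h := Efun_eq P1 (fun i' => Efun P2 (Y i') j) hP1 (by omega : (0:ℤ) ≤ P1) (le_refl P1)
    rw [show Ffun P1 P2 Y P1 j = Efun P1 (fun i' => Efun P2 (Y i') j) P1 from rfl, h]
    exact bz2 j
  have hFi0 : ∀ i, Ffun P1 P2 Y i 0 = 0 := by
    intro i
    refine Efun_zero P1 _ (fun t => ?_) i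
    have h := Efun_eq P2 (Y t) hP2 (le_refl (0:ℤ)) (by omega)
    rw [h]
    exact hb3 t 0 le_rfl
  have hFiP2 : ∀ i, Ffun P1 P2 Y i P2 = 0 := by
    intro i
    refine Efun_zero P1 _ (fun t => ?_) i
    have h := Efun_eq P2 (Y t) hP2 (by omega : (0:ℤ) ≤ P2) (le_refl P2)
    rw [h]
    exact hb4 t P2 le_rfl
  have hFnegi : ∀ i j, Ffun P1 P2 Y (-i) j = - Ffun P1 P2 Y i j := by
    intro i j
    exact Efun_neg P1 (fun i' => Efun P2 (Y i') j) hP1 (bz1 j) (bz2 j) i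
  have hFnegj : ∀ i j, Ffun P1 P2 Y i (-j) = - Ffun P1 P2 Y i j := by
    intro i j
    rw [FG P1 P2 Y i (-j), FG P1 P2 Y i j]
    exact Efun_neg P2 (fun j' => Efun P1 (fun i' => Y i' j') i) hP2 (bz3 i) (bz4 i) j
  have hFP1p : ∀ j, Ffun P1 P2 Y (P1+1) j = - Ffun P1 P2 Y (P1-1) j := by
    intro j
    have hmod : Int.ModEq (2*P1) (P1+1) (-(P1-1)) := Int.modEq_iff_dvd.mpr ⟨-1, by ring⟩
    have h1 : Ffun P1 P2 Y (P1+1) j = Ffun P1 P2 Y (-(P1-1)) j :=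
      Efun_mod P1 (fun i' => Efun P2 (Y i') j) hmod
    rw [h1]
    exact hFnegi (P1-1) j
  have hFP2p : ∀ i, Ffun P1 P2 Y i (P2+1) = - Ffun P1 P2 Y i (P2-1) := by
    intro i
    have hmod : Int.ModEq (2*P2) (P2+1) (-(P2-1)) := Int.modEq_iff_dvd.mpr ⟨-1, by ring⟩
    have h1 : Ffun P1 P2 Y i (P2+1) = Ffun P1 P2 Y i (-(P2-1)) := by
      rw [FG P1 P2 Y i (P2+1), FG P1 P2 Y i (-(P2-1))]
      exact Efun_mod P2 (fun j' => Efun P1 (fun i' => Y i' j') i) hmod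
    rw [h1]
    exact hFnegj i (P2-1)
  have hFYeq : ∀ i j, 0 ≤ i → i ≤ P1 → 0 ≤ j → j ≤ P2 → Ffun P1 P2 Y i j = Y i j := by
    intro i j h1 h2 h3 h4
    have ha := Efun_eq P1 (fun i' => Efun P2 (Y i') j) hP1 h1 h2
    rw [show Ffun P1 P2 Y i j = Efun P1 (fun i' => Efun P2 (Y i') j) i from rfl, ha]
    exact Efun_eq P2 (Y i) hP2 h3 h4
  -- the stencil equation at fundamental-domain points
  have key : ∀ k1 k2 : ℤ, 0 ≤ k1 → k1 ≤ P1 → 0 ≤ k2 → k2 ≤ P2 →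
      Ffun P1 P2 Y (k1-1) k2 + Ffun P1 P2 Y (k1+1) k2 +
      Ffun P1 P2 Y k1 (k2-1) + Ffun P1 P2 Y k1 (k2+1) = 0 := by
    intro k1 k2 h1 h2 h3 h4
    by_cases hk0 : k1 = 0
    · subst hk0
      rw [show (0:ℤ) - 1 = -1 by ring, show (0:ℤ) + 1 = 1 by ring]
      rw [hFnegi 1 k2, hF0j (k2-1), hF0j (k2+1)]
      ring
    by_cases hkP : k1 = P1
    · subst hkP
      rw [hFP1p k2, hFP1j (k2-1), hFP1j (k2+1)]
      ring
    by_cases hk20 : k2 = 0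
    · subst hk20
      rw [show (0:ℤ) - 1 = -1 by ring, show (0:ℤ) + 1 = 1 by ring]
      rw [hFnegj k1 1, hFi0 (k1-1), hFi0 (k1+1)]
      ring
    by_cases hk2P : k2 = P2
    · subst hk2P
      rw [hFP2p k1, hFiP2 (k1-1), hFiP2 (k1+1)]
      ring
    · rw [hFYeq (k1-1) k2 (by omega) (by omega) (by omega) (by omega),
          hFYeq (k1+1) k2 (by omega) (by omega) (by omega) (by omega),
          hFYeq k1 (k2-1) (by omega) (by omega) (by omega) (by omega),
          hFYeq k1 (k2+1) (by omega) (by omega) (by omega) (by omega)]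
      exact heq k1 k2 (by omega) (by omega) (by omega) (by omega)
  -- the stencil equation everywhere
  have hFeq : ∀ i j : ℤ, Ffun P1 P2 Y (i-1) j + Ffun P1 P2 Y (i+1) j +
      Ffun P1 P2 Y i (j-1) + Ffun P1 P2 Y i (j+1) = 0 := by
    intro i j
    obtain ⟨k1, ε1, hk1a, hk1b, hε1, H1⟩ := Efun_fold P1 hP1 i
    have S1 : Ffun P1 P2 Y (k1-1) j + Ffun P1 P2 Y (k1+1) j +
        Ffun P1 P2 Y k1 (j-1) + Ffun P1 P2 Y k1 (j+1) = 0 := by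
      obtain ⟨k2, ε2, hk2a, hk2b, hε2, H2⟩ := Efun_fold P2 hP2 j
      have KEY := key k1 k2 hk1a hk1b hk2a hk2b
      rw [FG P1 P2 Y (k1-1) k2, FG P1 P2 Y (k1+1) k2, FG P1 P2 Y k1 (k2-1),
          FG P1 P2 Y k1 (k2+1)] at KEY
      rw [FG P1 P2 Y (k1-1) j, FG P1 P2 Y (k1+1) j, FG P1 P2 Y k1 (j-1), FG P1 P2 Y k1 (j+1)]
      have C2 : Gfun P1 P2 Y j (k1-1) = ε2 * Gfun P1 P2 Y k2 (k1-1) :=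
        (H2 (fun j' => Efun P1 (fun i' => Y i' j') (k1-1)) (bz3 (k1-1)) (bz4 (k1-1))).1
      have C3 : Gfun P1 P2 Y j (k1+1) = ε2 * Gfun P1 P2 Y k2 (k1+1) :=
        (H2 (fun j' => Efun P1 (fun i' => Y i' j') (k1+1)) (bz3 (k1+1)) (bz4 (k1+1))).1
      have C4 := (H2 (fun j' => Efun P1 (fun i' => Y i' j') k1) (bz3 k1) (bz4 k1)).2
      rcases C4 with ⟨c4a, c4b⟩ | ⟨c4a, c4b⟩
      · have c4a' : Gfun P1 P2 Y (j+1) k1 = ε2 * Gfun P1 P2 Y (k2+1) k1 := c4a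
        have c4b' : Gfun P1 P2 Y (j-1) k1 = ε2 * Gfun P1 P2 Y (k2-1) k1 := c4b
        rw [C2, C3, c4a', c4b']
        linear_combination ε2 * KEY
      · have c4a' : Gfun P1 P2 Y (j+1) k1 = ε2 * Gfun P1 P2 Y (k2-1) k1 := c4a
        have c4b' : Gfun P1 P2 Y (j-1) k1 = ε2 * Gfun P1 P2 Y (k2+1) k1 := c4b
        rw [C2, C3, c4a', c4b']
        linear_combination ε2 * KEY
    have D1 : Ffun P1 P2 Y i (j-1) = ε1 * Ffun P1 P2 Y k1 (j-1) :=
      (H1 (fun i' => Efun P2 (Y i') (j-1)) (bz1 (j-1)) (bz2 (j-1))).1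
    have D2 : Ffun P1 P2 Y i (j+1) = ε1 * Ffun P1 P2 Y k1 (j+1) :=
      (H1 (fun i' => Efun P2 (Y i') (j+1)) (bz1 (j+1)) (bz2 (j+1))).1
    have D3 := (H1 (fun i' => Efun P2 (Y i') j) (bz1 j) (bz2 j)).2
    rcases D3 with ⟨d3a, d3b⟩ | ⟨d3a, d3b⟩
    · have d3a' : Ffun P1 P2 Y (i+1) j = ε1 * Ffun P1 P2 Y (k1+1) j := d3a
      have d3b' : Ffun P1 P2 Y (i-1) j = ε1 * Ffun P1 P2 Y (k1-1) j := d3b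
      rw [D1, D2, d3a', d3b']
      linear_combination ε1 * S1
    · have d3a' : Ffun P1 P2 Y (i+1) j = ε1 * Ffun P1 P2 Y (k1-1) j := d3a
      have d3b' : Ffun P1 P2 Y (i-1) j = ε1 * Ffun P1 P2 Y (k1+1) j := d3b
      rw [D1, D2, d3a', d3b']
      linear_combination ε1 * S1
  -- the sign-twisted function g satisfies the discrete wave equation
  have hzp : ∀ j : ℤ, (-1:ℝ)^(j+1) = -((-1:ℝ)^j) := by
    intro j
    rw [zpow_add₀ (by norm_num : (-1:ℝ) ≠ 0) j 1, zpow_one]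
    ring
  have hzm : ∀ j : ℤ, (-1:ℝ)^(j-1) = -((-1:ℝ)^j) := by
    intro j
    rw [zpow_sub₀ (by norm_num : (-1:ℝ) ≠ 0) j 1, zpow_one]
    ring
  have hwave : ∀ i j : ℤ, gfun P1 P2 Y (i+1) j + gfun P1 P2 Y (i-1) j -
      gfun P1 P2 Y i (j+1) - gfun P1 P2 Y i (j-1) = 0 := by
    intro i j
    have h := hFeq i j
    simp only [gfun]
    rw [hzp j, hzm j]
    linear_combination ((-1:ℝ)^j) * h
  -- diagonal invariant
  have hdiag : ∀ j i : ℤ, gfun P1 P2 Y (i+1) j - gfun P1 P2 Y i (j+1) = cfun P1 P2 Y (i-j) := by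
    intro j
    induction j using Int.induction_on with
    | zero =>
      intro i
      simp only [cfun]
      rw [show i - (0:ℤ) = i by ring, show (0:ℤ)+1 = 1 by ring]
    | succ k ih =>
      intro i
      have hw := hwave i ((k:ℤ)+1)
      rw [show ((k:ℤ)+1-1) = (k:ℤ) by ring] at hw
      have h2 := ih (i-1)
      rw [show i-1+1 = i by ring, show i-1-(k:ℤ) = i - ((k:ℤ)+1) by ring] at h2
      linear_combination hw + h2
    | pred k ih =>
      intro i
      have hw := hwave (i+1) (-(k:ℤ))
      rw [show (i+1-1) = i by ring] at hw
      have h2 := ih (i+1)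
      rw [show (-(k:ℤ)-1+1) = -(k:ℤ) by ring, show i - (-(k:ℤ)-1) = i+1 - -(k:ℤ) by ring]
      linear_combination h2 - hw
  -- d'Alembert decomposition g(i,j) = p(i+j) + q(i-j)
  set c : ℤ → ℝ := cfun P1 P2 Y with hcdef
  set p : ℤ → ℝ := fun u => gfun P1 P2 Y u 0 - qfun c u with hpdef
  have hq : ∀ v, qfun c (v+1) - qfun c (v-1) = c v := fun v => qfun_step c v
  have hgpq : ∀ j i : ℤ, gfun P1 P2 Y i j = p (i+j) + qfun c (i-j) := by
    intro j
    induction j using Int.induction_on with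
    | zero =>
      intro i
      rw [show i + (0:ℤ) = i by ring, show i - (0:ℤ) = i by ring, hpdef]
      ring
    | succ k ih =>
      intro i
      have h1 := hdiag k i
      have h2 := hq (i - k)
      rw [show i - (k:ℤ) + 1 = i - (k:ℤ) + 1 by ring, show i - (k:ℤ) - 1 = i - ((k:ℤ)+1) by ring] at h2
      have h3 := ih (i+1)
      rw [show i + 1 + (k:ℤ) = i + ((k:ℤ)+1) by ring, show i + 1 - (k:ℤ) = i - (k:ℤ) + 1 by ring] at h3
      linear_combination h3 + h2 - h1
    | pred k ih =>
      intro i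
      have h1 := hdiag (-(k:ℤ)-1) (i-1)
      rw [show i - 1 + 1 = i by ring, show (-(k:ℤ)-1+1) = -(k:ℤ) by ring,
          show i - 1 - (-(k:ℤ)-1) = i + (k:ℤ) by ring] at h1
      have h3 := ih (i-1)
      rw [show i - 1 + -(k:ℤ) = i + (-(k:ℤ)-1) by ring, show i - 1 - -(k:ℤ) = i + (k:ℤ) - 1 by ring] at h3
      have h2 := hq (i + k)
      rw [show i - (-(k:ℤ)-1) = i + (k:ℤ) + 1 by ring]
      linear_combination h1 - h2 + h3
  -- boundary values of g
  have hg0 : ∀ i : ℤ, gfun P1 P2 Y i 0 = 0 := by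
    intro i; simp only [gfun]; rw [hFi0 i]; ring
  have hgP2 : ∀ i : ℤ, gfun P1 P2 Y i P2 = 0 := by
    intro i; simp only [gfun]; rw [hFiP2 i]; ring
  have hg0j : ∀ j : ℤ, gfun P1 P2 Y 0 j = 0 := by
    intro j; simp only [gfun]; rw [hF0j j]; ring
  have hgP1 : ∀ j : ℤ, gfun P1 P2 Y P1 j = 0 := by
    intro j; simp only [gfun]; rw [hFP1j j]; ring
  -- q = -p, p even, p periodic
  have hqp : ∀ t : ℤ, qfun c t = - p t := by
    intro t
    have h := hg0 t
    rw [hpdef]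
    simp only
    linarith [h]
  have hpe : ∀ t : ℤ, p (-t) = p t := by
    intro t
    have hA := hgpq t 0
    rw [hg0j t, show (0:ℤ) + t = t by ring, show (0:ℤ) - t = -t by ring] at hA
    have h2 := hqp (-t)
    rw [h2] at hA
    linarith
  have hper1 : ∀ t : ℤ, p (t + 2*P1) = p t := by
    intro t
    have hC := hgpq (t+P1) P1
    rw [hgP1 (t+P1), show P1 + (t+P1) = t + 2*P1 by ring, show P1 - (t+P1) = -t by ring] at hC
    rw [hqp (-t), hpe t] at hC
    linarith
  have hper2 : ∀ t : ℤ, p (t + 2*P2) = p t := by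
    intro t
    have hD := hgpq P2 (t+P2)
    rw [hgP2 (t+P2), show t + P2 + P2 = t + 2*P2 by ring, show t + P2 - P2 = t by ring] at hD
    rw [hqp t] at hD
    linarith
  have hper1' : ∀ t : ℤ, p (t - 2*P1) = p t := by
    intro t
    have h := hper1 (t - 2*P1)
    rw [show t - 2*P1 + 2*P1 = t by ring] at h
    exact h.symm
  have hper2' : ∀ t : ℤ, p (t - 2*P2) = p t := by
    intro t
    have h := hper2 (t - 2*P2)
    rw [show t - 2*P2 + 2*P2 = t by ring] at h
    exact h.symm
  have hperk1 : ∀ k : ℤ, ∀ t, p (t + 2*P1*k) = p t := by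
    intro k
    induction k using Int.induction_on with
    | zero => intro t; rw [show t + 2*P1*0 = t by ring]
    | succ k ih =>
      intro t
      rw [show t + 2*P1*((k:ℤ)+1) = (t + 2*P1*(k:ℤ)) + 2*P1 by ring, hper1, ih]
    | pred k ih =>
      intro t
      rw [show t + 2*P1*(-(k:ℤ)-1) = (t + 2*P1*(-(k:ℤ))) - 2*P1 by ring, hper1', ih]
  have hperk2 : ∀ k : ℤ, ∀ t, p (t + 2*P2*k) = p t := by
    intro k
    induction k using Int.induction_on with
    | zero => intro t; rw [show t + 2*P2*0 = t by ring]
    | succ k ih =>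
      intro t
      rw [show t + 2*P2*((k:ℤ)+1) = (t + 2*P2*(k:ℤ)) + 2*P2 by ring, hper2, ih]
    | pred k ih =>
      intro t
      rw [show t + 2*P2*(-(k:ℤ)-1) = (t + 2*P2*(-(k:ℤ))) - 2*P2 by ring, hper2', ih]
  have hstep2 : ∀ t : ℤ, p (t + 2) = p t := by
    intro t
    obtain ⟨u, v, huv⟩ := hco
    have harg : t + 2 = (t + 2*P2*v) + 2*P1*u := by linear_combination (-2:ℤ) * huv
    rw [harg, hperk1 u, hperk2 v]
  have hstep2' : ∀ t : ℤ, p (t - 2) = p t := by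
    intro t
    have h := hstep2 (t-2)
    rw [show t - 2 + 2 = t by ring] at h
    exact h.symm
  have hpevenk : ∀ k : ℤ, ∀ t, p (t + 2*k) = p t := by
    intro k
    induction k using Int.induction_on with
    | zero => intro t; rw [show t + 2*0 = t by ring]
    | succ k ih =>
      intro t
      rw [show t + 2*((k:ℤ)+1) = (t + 2*(k:ℤ)) + 2 by ring, hstep2, ih]
    | pred k ih =>
      intro t
      rw [show t + 2*(-(k:ℤ)-1) = (t + 2*(-(k:ℤ))) - 2 by ring, hstep2', ih]
  -- conclude g ≡ 0, hence F ≡ 0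
  have hgz : ∀ i j : ℤ, gfun P1 P2 Y i j = 0 := by
    intro i j
    rw [hgpq j i, hqp (i-j)]
    have h := hpevenk j (i-j)
    rw [show i + j = i - j + 2*j by ring, h]
    ring
  have hFz : ∀ i j : ℤ, Ffun P1 P2 Y i j = 0 := by
    intro i j
    have h := hgz i j
    simp only [gfun] at h
    have hne : ((-1:ℝ))^j ≠ 0 := zpow_ne_zero j (by norm_num)
    exact (mul_eq_zero.mp h).resolve_left hne
  -- final conclusion
  intro i j
  by_cases hA : i ≤ 0
  · exact hb1 i j hA
  by_cases hB : P1 ≤ i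
  · exact hb2 i j hB
  by_cases hC : j ≤ 0
  · exact hb3 i j hC
  by_cases hD : P2 ≤ j
  · exact hb4 i j hD
  · rw [← hFYeq i j (by omega) (by omega) (by omega) (by omega)]
    exact hFz i j
private lemma sum_neg_one_pow (m : ℕ) :
    ∑ i ∈ Finset.Icc 1 m, (-1:ℤ)^i = if Even m then 0 else -1 := by
  induction m with
  | zero => simp
  | succ k ih =>
    rw [Finset.sum_Icc_succ_top (by omega : 1 ≤ k+1), ih]
    rcases Nat.even_or_odd k with h | h
    · have h1 : ¬ Even (k+1) := by simp [Nat.even_add_one, h]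
      rw [if_pos h, if_neg h1, Odd.neg_one_pow (by simp [Nat.odd_add_one, h])]
      ring
    · have h1 : Even (k+1) := by simp [Nat.even_add_one, h]
      rw [if_neg (by simp [Nat.not_even_iff_odd.mpr h]), if_pos h1, Even.neg_one_pow h1]
      ring

private lemma card_eq_lemma (m n : ℕ) (heven : Even (m*n)) :
    (((Finset.Icc 1 m) ×ˢ (Finset.Icc 1 n)).filter
        (fun p : ℕ × ℕ => Even (p.1 + p.2))).card =
    (((Finset.Icc 1 m) ×ˢ (Finset.Icc 1 n)).filter
        (fun p : ℕ × ℕ => ¬ Even (p.1 + p.2))).card := by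
  classical
  have h1 : ∑ p ∈ (Finset.Icc 1 m) ×ˢ (Finset.Icc 1 n),
      (if Even (p.1 + p.2) then (1:ℤ) else -1)
      = ((((Finset.Icc 1 m) ×ˢ (Finset.Icc 1 n)).filter
          (fun p : ℕ × ℕ => Even (p.1 + p.2))).card : ℤ)
        - ((((Finset.Icc 1 m) ×ˢ (Finset.Icc 1 n)).filter
          (fun p : ℕ × ℕ => ¬ Even (p.1 + p.2))).card : ℤ) := by
    rw [Finset.sum_ite]
    simp [Finset.sum_const]
    ring
  have h2 : ∑ p ∈ (Finset.Icc 1 m) ×ˢ (Finset.Icc 1 n),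
      (if Even (p.1 + p.2) then (1:ℤ) else -1)
      = (∑ i ∈ Finset.Icc 1 m, (-1:ℤ)^i) * (∑ j ∈ Finset.Icc 1 n, (-1:ℤ)^j) := by
    rw [Finset.sum_mul_sum, Finset.sum_product]
    apply Finset.sum_congr rfl
    intro i _
    apply Finset.sum_congr rfl
    intro j _
    rw [← pow_add]
    rcases Nat.even_or_odd (i+j) with h | h
    · rw [if_pos h, h.neg_one_pow]
    · rw [if_neg (by simpa using Nat.not_even_iff_odd.mpr h), h.neg_one_pow]
  have h3 : (∑ i ∈ Finset.Icc 1 m, (-1:ℤ)^i) * (∑ j ∈ Finset.Icc 1 n, (-1:ℤ)^j) = 0 := by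
    rcases Nat.even_mul.mp heven with h | h
    · rw [sum_neg_one_pow m, if_pos h]; ring
    · rw [sum_neg_one_pow n, if_pos h]; ring
  have := h1.symm.trans (h2.trans h3)
  omega
theorem stmt_7 (m n : ℕ) (hm : 1 ≤ m) (hn : 1 ≤ n)
    (heven : Even (m * n)) (hgcd : Nat.gcd (m + 1) (n + 1) = 1) :
    ∃ T : ((((Finset.Icc 1 m) ×ˢ (Finset.Icc 1 n)).filter
              (fun p : ℕ × ℕ => ¬ Even (p.1 + p.2)) : Finset (ℕ × ℕ)) → ℝ) →ₗ[ℝ]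
          ((((Finset.Icc 1 m) ×ˢ (Finset.Icc 1 n)).filter
              (fun p : ℕ × ℕ => Even (p.1 + p.2)) : Finset (ℕ × ℕ)) → ℝ),
      (∀ x a, T x a =
        ∑ s : (((Finset.Icc 1 m) ×ˢ (Finset.Icc 1 n)).filter
                 (fun p : ℕ × ℕ => ¬ Even (p.1 + p.2)) : Finset (ℕ × ℕ)),
          if ((a.val.1 = s.val.1 + 1 ∨ s.val.1 = a.val.1 + 1) ∧ a.val.2 = s.val.2) ∨
             (a.val.1 = s.val.1 ∧ (a.val.2 = s.val.2 + 1 ∨ s.val.2 = a.val.2 + 1))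
          then x s else 0) ∧
      Function.Bijective T := by
  set Sfin : Finset (ℕ × ℕ) := ((Finset.Icc 1 m) ×ˢ (Finset.Icc 1 n)).filter
    (fun p : ℕ × ℕ => ¬ Even (p.1 + p.2)) with hSfin
  set Afin : Finset (ℕ × ℕ) := ((Finset.Icc 1 m) ×ˢ (Finset.Icc 1 n)).filter
    (fun p : ℕ × ℕ => Even (p.1 + p.2)) with hAfin
  let T : (↥Sfin → ℝ) →ₗ[ℝ] (↥Afin → ℝ) :=
    { toFun := fun x a => ∑ s : ↥Sfin,
        if ((a.val.1 = s.val.1 + 1 ∨ s.val.1 = a.val.1 + 1) ∧ a.val.2 = s.val.2) ∨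
           (a.val.1 = s.val.1 ∧ (a.val.2 = s.val.2 + 1 ∨ s.val.2 = a.val.2 + 1))
        then x s else 0
      map_add' := by
        intro x y
        funext a
        simp only [Pi.add_apply]
        rw [← Finset.sum_add_distrib]
        apply Finset.sum_congr rfl
        intro s _
        split <;> simp
      map_smul' := by
        intro r x
        funext a
        simp only [Pi.smul_apply, RingHom.id_apply, smul_eq_mul]
        rw [Finset.mul_sum]
        apply Finset.sum_congr rfl
        intro s _
        split <;> simp }
  have hinj : Function.Injective T := by
    rw [injective_iff_map_eq_zero]
    intro x hx
    have hx' : ∀ a : ↥Afin,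
        (∑ s : ↥Sfin,
          if ((a.val.1 = s.val.1 + 1 ∨ s.val.1 = a.val.1 + 1) ∧ a.val.2 = s.val.2) ∨
             (a.val.1 = s.val.1 ∧ (a.val.2 = s.val.2 + 1 ∨ s.val.2 = a.val.2 + 1))
          then x s else 0) = 0 := by
      intro a
      have h := congrFun hx a
      exact h
    set yN : ℕ × ℕ → ℝ := fun p => if h : p ∈ Sfin then x ⟨p, h⟩ else 0 with hyN
    have hyNz : ∀ p, p ∉ Sfin → yN p = 0 := by
      intro p hp
      exact dif_neg hp
    have hsum4 : ∀ a : ↥Afin,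
        yN (a.val.1 - 1, a.val.2) + yN (a.val.1 + 1, a.val.2) +
        yN (a.val.1, a.val.2 - 1) + yN (a.val.1, a.val.2 + 1) = 0 := by
      intro a
      have haprop : a.val ∈ ((Finset.Icc 1 m) ×ˢ (Finset.Icc 1 n)).filter
          (fun p : ℕ × ℕ => Even (p.1 + p.2)) := a.prop
      rw [Finset.mem_filter, Finset.mem_product, Finset.mem_Icc, Finset.mem_Icc] at haprop
      obtain ⟨⟨⟨ha11, ha12⟩, ha21, ha22⟩, hapar⟩ := haprop
      have hS := hx' a
      have e1 : (∑ s : ↥Sfin,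
          if ((a.val.1 = s.val.1 + 1 ∨ s.val.1 = a.val.1 + 1) ∧ a.val.2 = s.val.2) ∨
             (a.val.1 = s.val.1 ∧ (a.val.2 = s.val.2 + 1 ∨ s.val.2 = a.val.2 + 1))
          then x s else 0)
          = ∑ p ∈ Sfin,
          (if ((a.val.1 = p.1 + 1 ∨ p.1 = a.val.1 + 1) ∧ a.val.2 = p.2) ∨
             (a.val.1 = p.1 ∧ (a.val.2 = p.2 + 1 ∨ p.2 = a.val.2 + 1))
          then yN p else 0) := by
        rw [← Finset.sum_coe_sort Sfin (fun p =>
          if ((a.val.1 = p.1 + 1 ∨ p.1 = a.val.1 + 1) ∧ a.val.2 = p.2) ∨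
             (a.val.1 = p.1 ∧ (a.val.2 = p.2 + 1 ∨ p.2 = a.val.2 + 1))
          then yN p else 0)]
        apply Finset.sum_congr rfl
        intro s _
        have hys : yN s.val = x s := by
          simp only [hyN]
          rw [dif_pos s.prop, Subtype.coe_eta]
        rw [hys]
      rw [e1, ← Finset.sum_filter] at hS
      set N4 : Finset (ℕ × ℕ) :=
        {(a.val.1 - 1, a.val.2), (a.val.1 + 1, a.val.2),
         (a.val.1, a.val.2 - 1), (a.val.1, a.val.2 + 1)} with hN4
      have e3 : Sfin.filter (fun p =>
          ((a.val.1 = p.1 + 1 ∨ p.1 = a.val.1 + 1) ∧ a.val.2 = p.2) ∨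
          (a.val.1 = p.1 ∧ (a.val.2 = p.2 + 1 ∨ p.2 = a.val.2 + 1))) ⊆ N4 := by
        intro p hp
        rw [Finset.mem_filter] at hp
        obtain ⟨_, hpc⟩ := hp
        rw [hN4]
        simp only [Finset.mem_insert, Finset.mem_singleton, Prod.ext_iff]
        omega
      have e4 : ∀ p ∈ N4, p ∉ Sfin.filter (fun p =>
          ((a.val.1 = p.1 + 1 ∨ p.1 = a.val.1 + 1) ∧ a.val.2 = p.2) ∨
          (a.val.1 = p.1 ∧ (a.val.2 = p.2 + 1 ∨ p.2 = a.val.2 + 1))) → yN p = 0 := by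
        intro p hpN hpf
        by_cases hps : p ∈ Sfin
        · exfalso
          apply hpf
          rw [Finset.mem_filter]
          refine ⟨hps, ?_⟩
          rw [hN4] at hpN
          simp only [Finset.mem_insert, Finset.mem_singleton, Prod.ext_iff] at hpN
          omega
        · exact hyNz p hps
      rw [Finset.sum_subset e3 e4, hN4] at hS
      have hne1 : (a.val.1 - 1, a.val.2) ∉ ({(a.val.1 + 1, a.val.2), (a.val.1, a.val.2 - 1), (a.val.1, a.val.2 + 1)} : Finset (ℕ × ℕ)) := by
        simp only [Finset.mem_insert, Finset.mem_singleton, Prod.ext_iff]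
        omega
      have hne2 : (a.val.1 + 1, a.val.2) ∉ ({(a.val.1, a.val.2 - 1), (a.val.1, a.val.2 + 1)} : Finset (ℕ × ℕ)) := by
        simp only [Finset.mem_insert, Finset.mem_singleton, Prod.ext_iff]
        omega
      have hne3 : (a.val.1, a.val.2 - 1) ∉ ({(a.val.1, a.val.2 + 1)} : Finset (ℕ × ℕ)) := by
        simp only [Finset.mem_singleton, Prod.ext_iff]
        omega
      rw [Finset.sum_insert hne1, Finset.sum_insert hne2, Finset.sum_insert hne3,
          Finset.sum_singleton] at hS
      linarith
    -- move to ℤ coordinates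
    set Y : ℤ → ℤ → ℝ := fun i j => yN (i.toNat, j.toNat) with hYdef
    have hb1 : ∀ i j : ℤ, i ≤ 0 → Y i j = 0 := by
      intro i j h
      simp only [hYdef]
      apply hyNz
      simp only [hSfin]
      simp only [Finset.mem_filter, Finset.mem_product, Finset.mem_Icc, not_and, Nat.even_iff]
      omega
    have hb2 : ∀ i j : ℤ, (m:ℤ)+1 ≤ i → Y i j = 0 := by
      intro i j h
      simp only [hYdef]
      apply hyNz
      simp only [hSfin]
      simp only [Finset.mem_filter, Finset.mem_product, Finset.mem_Icc, not_and, Nat.even_iff]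
      omega
    have hb3 : ∀ i j : ℤ, j ≤ 0 → Y i j = 0 := by
      intro i j h
      simp only [hYdef]
      apply hyNz
      simp only [hSfin]
      simp only [Finset.mem_filter, Finset.mem_product, Finset.mem_Icc, not_and, Nat.even_iff]
      omega
    have hb4 : ∀ i j : ℤ, (n:ℤ)+1 ≤ j → Y i j = 0 := by
      intro i j h
      simp only [hYdef]
      apply hyNz
      simp only [hSfin]
      simp only [Finset.mem_filter, Finset.mem_product, Finset.mem_Icc, not_and, Nat.even_iff]
      omega
    have heqY : ∀ i j : ℤ, 1 ≤ i → i ≤ (m:ℤ) → 1 ≤ j → j ≤ (n:ℤ) →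
        Y (i-1) j + Y (i+1) j + Y i (j-1) + Y i (j+1) = 0 := by
      intro i j h1 h2 h3 h4
      by_cases hpar : Even (i.toNat + j.toNat)
      · have hamem : (i.toNat, j.toNat) ∈ Afin := by
          rw [hAfin]
          simp only [Finset.mem_filter, Finset.mem_product, Finset.mem_Icc]
          refine ⟨⟨⟨by omega, by omega⟩, by omega, by omega⟩, hpar⟩
        have h4' := hsum4 ⟨(i.toNat, j.toNat), hamem⟩
        simp only [hYdef]
        rw [show (i-1).toNat = i.toNat - 1 by omega, show (i+1).toNat = i.toNat + 1 by omega,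
            show (j-1).toNat = j.toNat - 1 by omega, show (j+1).toNat = j.toNat + 1 by omega]
        simpa using h4'
      · have hz : ∀ (u v : ℤ), ¬ ((1:ℤ) ≤ u ∧ u ≤ (m:ℤ) ∧ 1 ≤ v ∧ v ≤ (n:ℤ) ∧
            ¬ (u.toNat + v.toNat) % 2 = 0) → Y u v = 0 := by
          intro u v hcond
          simp only [hYdef]
          apply hyNz
          simp only [hSfin]
          simp only [Finset.mem_filter, Finset.mem_product, Finset.mem_Icc, not_and, Nat.even_iff]
          omega
        rw [Nat.even_iff] at hpar
        rw [hz (i-1) j (by omega), hz (i+1) j (by omega), hz i (j-1) (by omega),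
            hz i (j+1) (by omega)]
        ring
    have hco : IsCoprime ((m:ℤ)+1) ((n:ℤ)+1) := by
      rw [Int.isCoprime_iff_gcd_eq_one]
      rw [show ((m:ℤ)+1) = ((m+1 : ℕ) : ℤ) by push_cast; ring,
          show ((n:ℤ)+1) = ((n+1 : ℕ) : ℤ) by push_cast; ring, Int.gcd_natCast_natCast]
      exact hgcd
    have hmain := main_inj ((m:ℤ)+1) ((n:ℤ)+1) (by omega) (by omega) hco Y hb1 hb2 hb3 hb4
      (by
        intro i j h1 h2 h3 h4
        exact heqY i j h1 (by omega) h3 (by omega))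
    funext s
    have hs := hmain (s.val.1 : ℤ) (s.val.2 : ℤ)
    simp only [hYdef] at hs
    simp only [Int.toNat_natCast, Prod.mk.eta] at hs
    simp only [hyN] at hs
    rw [dif_pos s.prop, Subtype.coe_eta] at hs
    simpa using hs
  have hcard : Sfin.card = Afin.card := by
    simp only [hSfin, hAfin]
    exact (card_eq_lemma m n heven).symm
  have e : ↥Sfin ≃ ↥Afin :=
    Finset.equivOfCardEq hcard
  let L : (↥Afin → ℝ) ≃ₗ[ℝ] (↥Sfin → ℝ) :=
    LinearEquiv.funCongrLeft ℝ ℝ e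
  have hMinj : Function.Injective (L.toLinearMap ∘ₗ T) := by
    rw [LinearMap.coe_comp]
    exact L.injective.comp hinj
  have hMsurj : Function.Surjective (L.toLinearMap ∘ₗ T) :=
    LinearMap.injective_iff_surjective.mp hMinj
  have hsurj : Function.Surjective T := by
    intro y
    obtain ⟨x0, hx0⟩ := hMsurj (L y)
    refine ⟨x0, L.injective ?_⟩
    simpa [LinearMap.comp_apply] using hx0
  exact ⟨T, fun x a => rfl, hinj, hsurj⟩
end

section
/- (Chessboard Minesweeper uniqueness) Let m, n ≥ 1 with gcd(m+1, n+1) = 1, R = {1,…,m} × {1,…,n}, and A = {(i,j) ∈ R : i+j even}. For (i,j) ∈ R let V(i,j) be the set of cells of R at Chebyshev distance 1 from (i,j) (the 8 king-move neighbors intersected with R). Then for any two subsets M, M' ⊆ R \ A, if |V(v) ∩ M| = |V(v) ∩ M'| for all v ∈ A, then M = M'. -/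
open Polynomial

namespace Stmt8Aux


noncomputable def cheb : ℕ → ℚ[X]
  | 0 => 0
  | 1 => 1
  | (k+2) => X * cheb (k+1) - cheb k

lemma cheb_two : cheb 2 = X := by simp [cheb]

lemma cheb_add (k : ℕ) : ∀ a, cheb (a + k + 1) = cheb (a+1) * cheb (k+1) - cheb a * cheb k := by
  intro a
  induction a using Nat.twoStepInduction with
  | zero => simp [cheb]
  | one =>
    rw [show 1 + k + 1 = k + 2 by omega, cheb, show (1:ℕ)+1 = 2 by omega, cheb_two]
    simp [cheb]
  | more a ih0 ih1 =>
    rw [show a + 2 + k + 1 = (a + k + 1) + 2 by omega, cheb,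
        show a + k + 1 + 1 = (a+1) + k + 1 by omega, ih1, ih0,
        show a + 2 + 1 = a + 3 from rfl, show cheb (a+3) = X * cheb (a+2) - cheb (a+1) from rfl,
        show cheb (a+2) = X * cheb (a+1) - cheb a from rfl]
    ring

lemma cheb_coprime_succ (k : ℕ) : IsCoprime (cheb k) (cheb (k+1)) := by
  induction k with
  | zero => simpa [cheb] using (isCoprime_zero_left (x := (cheb 1))).mpr (by simp [cheb])
  | succ k ih =>
    have h2 := (ih.symm.neg_right).add_mul_left_right X
    rw [show -cheb k + cheb (k+1) * X = X * cheb (k+1) - cheb k by ring] at h2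
    rw [show cheb (k+2) = X * cheb (k+1) - cheb k from rfl]
    exact h2

lemma cheb_coprime : ∀ N a b, a + b ≤ N → Nat.gcd a b = 1 → IsCoprime (cheb a) (cheb b) := by
  intro N
  induction N with
  | zero =>
    intro a b hab hg
    have hab' : a + b ≤ 0 := hab
    have ha : a = 0 := by omega
    have hb : b = 0 := by omega
    subst ha; subst hb; simp at hg
  | succ N ih =>
    intro a b hab hg
    rcases Nat.lt_trichotomy a b with hlt | heq | hgt
    · rcases Nat.eq_zero_or_pos a with rfl | ha
      · have : b = 1 := by simpa using hg
        subst this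
        simpa [cheb] using (isCoprime_zero_left (x := (cheb 1))).mpr (by simp [cheb])
      · set c : ℕ := b - a - 1 with hc
        have hb : b = a + c + 1 := by omega
        have hgc : Nat.gcd a (c+1) = 1 := by
          have := Nat.gcd_sub_self_right (m := a) (n := b) (by omega)
          rw [show b - a = c + 1 by omega] at this
          rw [this]; exact hg
        have hcop : IsCoprime (cheb a) (cheb (c+1)) := ih a (c+1) (by omega) hgc
        have hmul : IsCoprime (cheb a) (cheb (a+1) * cheb (c+1)) :=
          (cheb_coprime_succ a).mul_right hcop
        have h2 := hmul.add_mul_left_right (-cheb c)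
        rw [show cheb (a+1) * cheb (c+1) + cheb a * (-cheb c)
              = cheb (a+1) * cheb (c+1) - cheb a * cheb c by ring] at h2
        rw [hb, cheb_add]
        exact h2
    · subst heq
      have : a = 1 := by simpa using hg
      subst this
      exact (isCoprime_one_left).symm.symm
    · rcases Nat.eq_zero_or_pos b with rfl | hb
      · have : a = 1 := by simpa using hg
        subst this
        exact ((isCoprime_zero_left (x := (cheb 1))).mpr (by simp [cheb])).symm
      · set c : ℕ := a - b - 1 with hc
        have ha : a = b + c + 1 := by omega
        have hgc : Nat.gcd b (c+1) = 1 := by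
          have := Nat.gcd_sub_self_right (m := b) (n := a) (by omega)
          rw [show a - b = c + 1 by omega] at this
          rw [this, Nat.gcd_comm]; exact hg
        have hcop : IsCoprime (cheb b) (cheb (c+1)) := ih b (c+1) (by omega) hgc
        have hmul : IsCoprime (cheb b) (cheb (b+1) * cheb (c+1)) :=
          (cheb_coprime_succ b).mul_right hcop
        have h2 := hmul.add_mul_left_right (-cheb c)
        rw [show cheb (b+1) * cheb (c+1) + cheb b * (-cheb c)
              = cheb (b+1) * cheb (c+1) - cheb b * cheb c by ring] at h2
        rw [ha, cheb_add]
        exact h2.symm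

def pathOp (n : ℕ) : Module.End ℚ (ℕ → ℚ) where
  toFun c := fun j => if 1 ≤ j ∧ j ≤ n then c (j-1) + c (j+1) else 0
  map_add' c d := by
    funext j; by_cases h : 1 ≤ j ∧ j ≤ n
    · simp [h]; ring
    · simp [h]
  map_smul' a c := by
    funext j; by_cases h : 1 ≤ j ∧ j ≤ n
    · simp [h]; ring
    · simp [h]

lemma pathOp_apply (n : ℕ) (c : ℕ → ℚ) (j : ℕ) :
    pathOp n c j = if 1 ≤ j ∧ j ≤ n then c (j-1) + c (j+1) else 0 := rfl

def E (n j : ℕ) : ℕ → ℚ := fun i => if i = j ∧ 1 ≤ j ∧ j ≤ n then 1 else 0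

lemma E_out (n j : ℕ) (h : j = 0 ∨ n < j) : E n j = 0 := by
  funext i
  simp only [E, Pi.zero_apply]
  rw [if_neg]
  rintro ⟨-, hj1, hj2⟩; omega

lemma pathOp_E (n j : ℕ) (h1 : 1 ≤ j) (h2 : j ≤ n) :
    pathOp n (E n j) = E n (j-1) + E n (j+1) := by
  funext p
  simp only [pathOp_apply, E, Pi.add_apply]
  split_ifs
  all_goals try norm_num
  all_goals exfalso
  all_goals omega

lemma cheb_apply_E (n : ℕ) : ∀ k, k ≤ n+1 → aeval (pathOp n) (cheb k) (E n 1) = E n k := by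
  intro k
  induction k using Nat.twoStepInduction with
  | zero => intro _; simp [cheb, E_out]
  | one => intro _; simp [cheb]
  | more k ih0 ih1 =>
    intro hk
    rw [show cheb (k+2) = X * cheb (k+1) - cheb k from rfl]
    rw [map_sub, map_mul, aeval_X]
    have e1 := ih1 (by omega)
    have e0 := ih0 (by omega)
    rw [LinearMap.sub_apply, Module.End.mul_apply, e1, e0,
        pathOp_E n (k+1) (by omega) (by omega)]
    simp

lemma cheb_annihilates (n : ℕ) (c : ℕ → ℚ) (hc0 : c 0 = 0) (hcn : ∀ j, n < j → c j = 0) :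
    aeval (pathOp n) (cheb (n+1)) c = 0 := by
  have hEj : ∀ j, aeval (pathOp n) (cheb (n+1)) (E n j) = 0 := by
    intro j
    by_cases hj : 1 ≤ j ∧ j ≤ n
    · have hEj1 : E n j = aeval (pathOp n) (cheb j) (E n 1) :=
        (cheb_apply_E n j (by omega)).symm
      rw [hEj1, ← Module.End.mul_apply, ← map_mul, mul_comm, map_mul, Module.End.mul_apply,
          cheb_apply_E n (n+1) le_rfl, E_out n (n+1) (Or.inr (by omega))]
      simp
    · rw [E_out n j (by omega)]
      simp
  have hdecomp : c = ∑ j ∈ Finset.Icc 1 n, c j • E n j := by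
    funext i
    rw [Finset.sum_apply]
    by_cases hi : 1 ≤ i ∧ i ≤ n
    · rw [Finset.sum_eq_single i]
      · simp only [Pi.smul_apply, E, smul_eq_mul]
        rw [if_pos ⟨trivial, hi⟩, mul_one]
      · intro b _ hbi
        simp only [Pi.smul_apply, E, smul_eq_mul]
        rw [if_neg (by rintro ⟨rfl, -⟩; exact hbi rfl), mul_zero]
      · intro hcon
        exact absurd (Finset.mem_Icc.mpr hi) hcon
    · have hci : c i = 0 := by
        rcases Nat.lt_or_ge i 1 with hlt | hge
        · rw [show i = 0 by omega]; exact hc0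
        · exact hcn i (by omega)
      rw [hci]
      refine (Finset.sum_eq_zero ?_).symm
      intro j hj
      simp only [Finset.mem_Icc] at hj
      simp only [Pi.smul_apply, E, smul_eq_mul]
      rw [if_neg (by rintro ⟨rfl, -⟩; omega), mul_zero]
  rw [hdecomp, map_sum]
  refine Finset.sum_eq_zero ?_
  intro j _
  rw [LinearMap.map_smul, hEj j, smul_zero]



lemma core (m n : ℕ) (hgcd : Nat.gcd (m+1) (n+1) = 1)
    (f : ℕ → ℕ → ℚ)
    (hsupp : ∀ i j, ¬(1 ≤ i ∧ i ≤ m ∧ 1 ≤ j ∧ j ≤ n) → f i j = 0)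
    (hrel : ∀ i j, 1 ≤ i → i ≤ m → 1 ≤ j → j ≤ n →
      f (i-1) j + f (i+1) j + f i (j-1) + f i (j+1) = 0) :
    ∀ i j, f i j = 0 := by
  have hcol0 : ∀ i, f i 0 = 0 := fun i => hsupp i 0 (by omega)
  have hcoln : ∀ i j, n < j → f i j = 0 := fun i j hj => hsupp i j (by omega)
  have hc0 : f 0 = 0 := funext fun j => hsupp 0 j (by omega)
  have hcm : f (m+1) = 0 := funext fun j => hsupp (m+1) j (by omega)
  have hrec : ∀ i, 1 ≤ i → i ≤ m → f (i+1) = -(pathOp n (f i)) - f (i-1) := by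
    intro i h1 h2
    funext j
    simp only [Pi.sub_apply, Pi.neg_apply, pathOp_apply]
    by_cases hj : 1 ≤ j ∧ j ≤ n
    · rw [if_pos hj]
      have := hrel i j h1 h2 hj.1 hj.2
      linarith [this]
    · rw [if_neg hj]
      have h1' : f (i+1) j = 0 := hsupp _ _ (by omega)
      have h2' : f (i-1) j = 0 := hsupp _ _ (by omega)
      rw [h1', h2']; ring
  have key : ∀ k, k ≤ m+1 → aeval (pathOp n) (cheb k) (f 1) = ((-1:ℚ)^(k+1)) • f k := by
    intro k
    induction k using Nat.twoStepInduction with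
    | zero => intro _; simp [cheb, hc0]
    | one => intro _; simp [cheb]
    | more k ih0 ih1 =>
      intro hk
      have e1 := ih1 (by omega)
      have e0 := ih0 (by omega)
      rw [show cheb (k+2) = X * cheb (k+1) - cheb k from rfl, map_sub, map_mul, aeval_X,
          LinearMap.sub_apply, Module.End.mul_apply, e1, e0]
      have hrk := hrec (k+1) (by omega) (by omega)
      rw [show (k+1)-1 = k from rfl] at hrk
      have hP : pathOp n (f (k+1)) = -f (k+2) - f k := by
        rw [show k+1+1 = k+2 from rfl] at hrk
        rw [hrk]; funext j
        simp only [Pi.sub_apply, Pi.neg_apply]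
        ring
      rw [map_smul, hP]
      funext j
      simp only [Pi.smul_apply, Pi.sub_apply, Pi.neg_apply, smul_eq_mul]
      rw [show k+1+1 = k+2 from rfl, show k+2+1 = k+3 from rfl]
      ring
  have hM1 : aeval (pathOp n) (cheb (m+1)) (f 1) = 0 := by
    rw [key (m+1) le_rfl, hcm]; simp
  have hN1 : aeval (pathOp n) (cheb (n+1)) (f 1) = 0 :=
    cheb_annihilates n (f 1) (hcol0 1) (hcoln 1)
  obtain ⟨r, t, hrt⟩ := cheb_coprime (m+1+(n+1)) (m+1) (n+1) le_rfl hgcd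
  have hf1 : f 1 = 0 := by
    have e : (aeval (pathOp n) (r * cheb (m+1) + t * cheb (n+1)) : Module.End ℚ (ℕ → ℚ)) (f 1)
        = f 1 := by
      rw [hrt, map_one, Module.End.one_apply]
    rw [map_add, map_mul, map_mul, LinearMap.add_apply, Module.End.mul_apply,
        Module.End.mul_apply, hM1, hN1, LinearMap.map_zero, LinearMap.map_zero] at e
    simpa using e.symm
  have hall : ∀ i, f i = 0 := by
    intro i
    induction i using Nat.twoStepInduction with
    | zero => exact hc0
    | one => exact hf1
    | more i ih0 ih1 =>
      by_cases hi : i + 1 ≤ m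
      · rw [show i+2 = (i+1)+1 from rfl, hrec (i+1) (by omega) hi,
            show (i+1)-1 = i from rfl, ih0, ih1]
        simp
      · funext j; exact hsupp _ _ (by omega)
  intro i j
  exact congrFun (hall i) j

end Stmt8Aux

/-- King-move (Chebyshev distance 1) adjacency on ℕ × ℕ. -/
def kingAdj (v w : ℕ × ℕ) : Prop :=
  max |(v.1 : ℤ) - (w.1 : ℤ)| |(v.2 : ℤ) - (w.2 : ℤ)| = 1

instance : DecidableRel kingAdj := fun _ _ => by unfold kingAdj; infer_instance

theorem stmt_8 (m n : ℕ) (hm : 1 ≤ m) (hn : 1 ≤ n)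
    (hgcd : Nat.gcd (m + 1) (n + 1) = 1)
    (R : Finset (ℕ × ℕ)) (hR : R = (Finset.Icc 1 m) ×ˢ (Finset.Icc 1 n))
    (A : Finset (ℕ × ℕ)) (hA : A = R.filter (fun p => Even (p.1 + p.2)))
    (M M' : Finset (ℕ × ℕ)) (hM : M ⊆ R \ A) (hM' : M' ⊆ R \ A)
    (h : ∀ v ∈ A, (M.filter (fun w => kingAdj v w)).card
                = (M'.filter (fun w => kingAdj v w)).card) :
    M = M' := by
  classical
  set fQ : ℕ → ℕ → ℚ :=
    fun i j => (if (i,j) ∈ M then (1:ℚ) else 0) - (if (i,j) ∈ M' then 1 else 0) with hfQ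
  have memM : ∀ w ∈ M, w ∈ R ∧ ¬ Even (w.1 + w.2) := by
    intro w hw
    have hw2 := hM hw
    rw [Finset.mem_sdiff] at hw2
    refine ⟨hw2.1, fun hev => hw2.2 ?_⟩
    rw [hA, Finset.mem_filter]; exact ⟨hw2.1, hev⟩
  have memM' : ∀ w ∈ M', w ∈ R ∧ ¬ Even (w.1 + w.2) := by
    intro w hw
    have hw2 := hM' hw
    rw [Finset.mem_sdiff] at hw2
    refine ⟨hw2.1, fun hev => hw2.2 ?_⟩
    rw [hA, Finset.mem_filter]; exact ⟨hw2.1, hev⟩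
  have fQ_zero : ∀ i j, ¬((i,j) ∈ R ∧ ¬ Even (i + j)) → fQ i j = 0 := by
    intro i j hij
    have h1 : (i,j) ∉ M := fun hmem => hij (memM _ hmem)
    have h2 : (i,j) ∉ M' := fun hmem => hij (memM' _ hmem)
    simp [hfQ, h1, h2]
  have hbounds : ∀ i j, (i,j) ∈ R ↔ (1 ≤ i ∧ i ≤ m ∧ 1 ≤ j ∧ j ≤ n) := by
    intro i j
    rw [hR, Finset.mem_product]
    simp only [Finset.mem_Icc]
    tauto
  have hsupp : ∀ i j, ¬(1 ≤ i ∧ i ≤ m ∧ 1 ≤ j ∧ j ≤ n) → fQ i j = 0 := by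
    intro i j hij
    exact fQ_zero i j (fun hc => hij ((hbounds i j).1 hc.1))
  have kingcard : ∀ (i j : ℕ), 1 ≤ i → 1 ≤ j → Even (i + j) →
      ∀ N : Finset (ℕ×ℕ), (∀ w ∈ N, ¬ Even (w.1 + w.2)) →
      ((N.filter (fun w => kingAdj (i,j) w)).card : ℚ)
        = (if (i-1,j) ∈ N then 1 else 0) + (if (i+1,j) ∈ N then 1 else 0)
        + (if (i,j-1) ∈ N then 1 else 0) + (if (i,j+1) ∈ N then 1 else 0) := by
    intro i j hi hj hpar N hN
    have hset : N.filter (fun w => kingAdj (i,j) w)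
        = ({(i-1,j),(i+1,j),(i,j-1),(i,j+1)} : Finset (ℕ×ℕ)).filter (· ∈ N) := by
      ext w
      simp only [Finset.mem_filter, Finset.mem_insert, Finset.mem_singleton]
      constructor
      · rintro ⟨hwN, hk⟩
        refine ⟨?_, hwN⟩
        obtain ⟨w1, w2⟩ := w
        have hodd := hN _ hwN
        simp only at hodd
        unfold kingAdj at hk
        simp only at hk
        have ha1 : |(i:ℤ) - w1| ≤ 1 := le_of_le_of_eq (le_max_left _ _) hk
        have ha2 : |(j:ℤ) - w2| ≤ 1 := le_of_le_of_eq (le_max_right _ _) hk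
        have hne : ¬((i:ℤ) - w1 = 0 ∧ (j:ℤ) - w2 = 0) := by
          rintro ⟨e1, e2⟩; rw [e1, e2] at hk; simp at hk
        rw [abs_le] at ha1 ha2
        have hp1 : (i + j) % 2 = 0 := Nat.even_iff.mp hpar
        have hp2 : ¬ (w1 + w2) % 2 = 0 := fun hc => hodd (Nat.even_iff.mpr hc)
        simp only [Prod.mk.injEq]
        omega
      · rintro ⟨hw, hwN⟩
        refine ⟨hwN, ?_⟩
        unfold kingAdj
        rcases hw with hw | hw | hw | hw <;> subst hw <;> simp only
        · rw [show ((i-1:ℕ):ℤ) = (i:ℤ) - 1 by omega,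
              show (i:ℤ) - ((i:ℤ) - 1) = 1 by ring, sub_self]
          simp
        · rw [show ((i+1:ℕ):ℤ) = (i:ℤ) + 1 by omega,
              show (i:ℤ) - ((i:ℤ) + 1) = -1 by ring, sub_self]
          simp
        · rw [show ((j-1:ℕ):ℤ) = (j:ℤ) - 1 by omega,
              show (j:ℤ) - ((j:ℤ) - 1) = 1 by ring, sub_self]
          simp
        · rw [show ((j+1:ℕ):ℤ) = (j:ℤ) + 1 by omega,
              show (j:ℤ) - ((j:ℤ) + 1) = -1 by ring, sub_self]
          simp
    have hd1 : ((i-1,j) : ℕ×ℕ) ∉ ({(i+1,j),(i,j-1),(i,j+1)} : Finset (ℕ×ℕ)) := by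
      simp only [Finset.mem_insert, Finset.mem_singleton, Prod.mk.injEq]
      omega
    have hd2 : ((i+1,j) : ℕ×ℕ) ∉ ({(i,j-1),(i,j+1)} : Finset (ℕ×ℕ)) := by
      simp only [Finset.mem_insert, Finset.mem_singleton, Prod.mk.injEq]
      omega
    have hd3 : ((i,j-1) : ℕ×ℕ) ∉ ({(i,j+1)} : Finset (ℕ×ℕ)) := by
      simp only [Finset.mem_singleton, Prod.mk.injEq]
      omega
    rw [hset, Finset.card_filter,
        show ({(i-1,j),(i+1,j),(i,j-1),(i,j+1)} : Finset (ℕ×ℕ))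
          = insert (i-1,j) (insert (i+1,j) (insert (i,j-1) {(i,j+1)})) from rfl,
        Finset.sum_insert hd1, Finset.sum_insert hd2, Finset.sum_insert hd3,
        Finset.sum_singleton]
    push_cast [apply_ite (Nat.cast : ℕ → ℚ)]
    ring
  have hrel : ∀ i j, 1 ≤ i → i ≤ m → 1 ≤ j → j ≤ n →
      fQ (i-1) j + fQ (i+1) j + fQ i (j-1) + fQ i (j+1) = 0 := by
    intro i j h1 h2 h3 h4
    by_cases hev : Even (i + j)
    · have hvA : (i,j) ∈ A := by
        rw [hA, Finset.mem_filter]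
        exact ⟨(hbounds i j).2 ⟨h1, h2, h3, h4⟩, hev⟩
      have hcards := h (i,j) hvA
      have cM := kingcard i j h1 h3 hev M (fun w hw => (memM w hw).2)
      have cM' := kingcard i j h1 h3 hev M' (fun w hw => (memM' w hw).2)
      have hcq : ((M.filter (fun w => kingAdj (i,j) w)).card : ℚ)
          = ((M'.filter (fun w => kingAdj (i,j) w)).card : ℚ) := by
        exact_mod_cast hcards
      rw [cM, cM'] at hcq
      simp only [hfQ]
      linarith
    · have hp : ¬ (i + j) % 2 = 0 := fun hc => hev (Nat.even_iff.mpr hc)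
      have z1 : fQ (i-1) j = 0 := fQ_zero _ _ (by
        rintro ⟨-, hodd⟩; exact hodd (Nat.even_iff.mpr (by omega)))
      have z2 : fQ (i+1) j = 0 := fQ_zero _ _ (by
        rintro ⟨-, hodd⟩; exact hodd (Nat.even_iff.mpr (by omega)))
      have z3 : fQ i (j-1) = 0 := fQ_zero _ _ (by
        rintro ⟨-, hodd⟩; exact hodd (Nat.even_iff.mpr (by omega)))
      have z4 : fQ i (j+1) = 0 := fQ_zero _ _ (by
        rintro ⟨-, hodd⟩; exact hodd (Nat.even_iff.mpr (by omega)))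
      rw [z1, z2, z3, z4]; ring
  have hzero := Stmt8Aux.core m n hgcd fQ hsupp hrel
  ext p
  obtain ⟨i, j⟩ := p
  have hz := hzero i j
  simp only [hfQ] at hz
  by_cases h1 : (i,j) ∈ M
  · by_cases h2 : (i,j) ∈ M'
    · simp [h1, h2]
    · exfalso; rw [if_pos h1, if_neg h2] at hz; norm_num at hz
  · by_cases h2 : (i,j) ∈ M'
    · exfalso; rw [if_neg h1, if_pos h2] at hz; norm_num at hz
    · simp [h1, h2]
end

section
/- (2×n Minesweeper uniqueness) Let n ≥ 1 with 3 ∤ (n+1). Consider R = {1,2} × {1,…,n} and A = {(1,j) : 1 ≤ j ≤ n} (the top row). With king-move neighbors V(i,j) = {(i',j') ∈ R : max(|i-i'|,|j-j'|) = 1}, for any M, M' ⊆ R \ A: if |V(v) ∩ M| = |V(v) ∩ M'| for all v ∈ A, then M = M'. -/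
lemma king_iff (j k : ℕ) (hj : 1 ≤ j) (hk : 1 ≤ k) :
    kingAdj (1, j) (2, k) ↔ (k = j - 1 ∨ k = j ∨ k = j + 1) := by
  show max |(1:ℤ) - (2:ℤ)| |(j:ℤ) - (k:ℤ)| = 1 ↔ _
  rw [show |(1:ℤ) - 2| = 1 from by norm_num, max_eq_left_iff, abs_le]
  omega

lemma card_three {α : Type*} [DecidableEq α] (N : Finset α) (a b c : α)
    (hab : a ≠ b) (hac : a ≠ c) (hbc : b ≠ c) :
    ((N.filter (fun w => w = a ∨ w = b ∨ w = c)).card : ℤ)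
      = (if a ∈ N then 1 else 0) + (if b ∈ N then 1 else 0) + (if c ∈ N then 1 else 0) := by
  classical
  rw [Finset.card_filter]
  push_cast
  have hpt : ∀ w ∈ N, (if w = a ∨ w = b ∨ w = c then (1:ℤ) else 0)
      = (if w = a then (1:ℤ) else 0) + ((if w = b then (1:ℤ) else 0)
        + (if w = c then (1:ℤ) else 0)) := by
    intro w _
    by_cases h1 : w = a <;> by_cases h2 : w = b <;> by_cases h3 : w = c <;> simp_all
  rw [Finset.sum_congr rfl hpt, Finset.sum_add_distrib, Finset.sum_add_distrib,
      Finset.sum_ite_eq' N a (fun _ => (1:ℤ)), Finset.sum_ite_eq' N b (fun _ => (1:ℤ)),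
      Finset.sum_ite_eq' N c (fun _ => (1:ℤ))]
  ring

theorem stmt_9 (n : ℕ) (hn : 1 ≤ n) (h3 : ¬ (3 ∣ (n + 1)))
    (R : Finset (ℕ × ℕ)) (hR : R = ({1, 2} : Finset ℕ) ×ˢ (Finset.Icc 1 n))
    (A : Finset (ℕ × ℕ)) (hA : A = ({1} : Finset ℕ) ×ˢ (Finset.Icc 1 n))
    (M M' : Finset (ℕ × ℕ)) (hM : M ⊆ R \ A) (hM' : M' ⊆ R \ A)
    (h : ∀ v ∈ A, (M.filter (fun w => kingAdj v w)).card
                = (M'.filter (fun w => kingAdj v w)).card) :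
    M = M' := by
  classical
  subst hR hA
  -- every element of M or M' has the form (2, k) with 1 ≤ k ≤ n
  have hmemN : ∀ N : Finset (ℕ × ℕ),
      N ⊆ (({1, 2} : Finset ℕ) ×ˢ (Finset.Icc 1 n)) \ (({1} : Finset ℕ) ×ˢ (Finset.Icc 1 n)) →
      ∀ w ∈ N, w.1 = 2 ∧ 1 ≤ w.2 ∧ w.2 ≤ n := by
    intro N hN w hw
    have := hN hw
    simp only [Finset.mem_sdiff, Finset.mem_product, Finset.mem_insert, Finset.mem_singleton,
      Finset.mem_Icc, not_and] at this
    omega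
  set f : ℕ → ℤ := fun k =>
    (if (2, k) ∈ M then 1 else 0) - (if (2, k) ∈ M' then 1 else 0) with hfdef
  have hfout : ∀ k, k = 0 ∨ n < k → f k = 0 := by
    intro k hk
    have h1 : (2, k) ∉ M := fun hc => by have := hmemN M hM _ hc; simp at this; omega
    have h2 : (2, k) ∉ M' := fun hc => by have := hmemN M' hM' _ hc; simp at this; omega
    simp [hfdef, h1, h2]
  have hrec : ∀ j, 1 ≤ j → j ≤ n → f (j - 1) + f j + f (j + 1) = 0 := by
    intro j h1 h2
    have hv : (1, j) ∈ (({1} : Finset ℕ) ×ˢ (Finset.Icc 1 n)) := by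
      simp [Finset.mem_product, Finset.mem_Icc]; omega
    have hcnt := h (1, j) hv
    have e1 : ∀ N : Finset (ℕ × ℕ),
        N ⊆ (({1, 2} : Finset ℕ) ×ˢ (Finset.Icc 1 n)) \ (({1} : Finset ℕ) ×ˢ (Finset.Icc 1 n)) →
        N.filter (fun w => kingAdj (1, j) w)
          = N.filter (fun w => w = (2, j - 1) ∨ w = (2, j) ∨ w = (2, j + 1)) := by
      intro N hN
      apply Finset.filter_congr
      intro w hw
      obtain ⟨a, b⟩ := w
      obtain ⟨ha, hb1, hb2⟩ := hmemN N hN _ hw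
      dsimp at ha hb1 hb2
      subst ha
      rw [king_iff j b h1 hb1]
      simp only [Prod.mk.injEq, true_and]
    have hd1 : ((2, j - 1) : ℕ × ℕ) ≠ (2, j) := by
      simp only [ne_eq, Prod.mk.injEq, true_and]; omega
    have hd2 : ((2, j - 1) : ℕ × ℕ) ≠ (2, j + 1) := by
      simp only [ne_eq, Prod.mk.injEq, true_and]; omega
    have hd3 : ((2, j) : ℕ × ℕ) ≠ (2, j + 1) := by
      simp only [ne_eq, Prod.mk.injEq, true_and]; omega
    have hcast := congrArg (Nat.cast : ℕ → ℤ) hcnt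
    rw [e1 M hM, e1 M' hM'] at hcast
    rw [card_three M _ _ _ hd1 hd2 hd3, card_three M' _ _ _ hd1 hd2 hd3] at hcast
    simp only [hfdef]
    linarith
  set c : ℕ → ℤ := fun k => if k % 3 = 0 then 0 else if k % 3 = 1 then 1 else -1 with hcdef
  have hform : ∀ j, j ≤ n + 1 → f j = f 1 * c j := by
    intro j
    induction j using Nat.strong_induction_on with
    | _ j ih =>
      intro hj
      match j with
      | 0 => rw [hfout 0 (Or.inl rfl)]; simp [hcdef]
      | 1 => simp [hcdef]
      | (k + 2) =>
        have h1 := hrec (k + 1) (by omega) (by omega)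
        have e0 := ih k (by omega) (by omega)
        have e1 := ih (k + 1) (by omega) (by omega)
        have hc : c (k + 2) = -(c k + c (k + 1)) := by
          have h3k : k % 3 = 0 ∨ k % 3 = 1 ∨ k % 3 = 2 := by omega
          rcases h3k with hh | hh | hh
          · have a1 : (k + 1) % 3 = 1 := by omega
            have a2 : (k + 2) % 3 = 2 := by omega
            simp [hcdef, hh, a1, a2]
          · have a1 : (k + 1) % 3 = 2 := by omega
            have a2 : (k + 2) % 3 = 0 := by omega
            simp [hcdef, hh, a1, a2]
          · have a1 : (k + 1) % 3 = 0 := by omega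
            have a2 : (k + 2) % 3 = 1 := by omega
            simp [hcdef, hh, a1, a2]
        have hrw : (k + 1) - 1 = k := by omega
        rw [hrw] at h1
        rw [show f (k + 2) = -(f k + f (k + 1)) from by linarith, e0, e1, hc]
        ring
  have hend := hform (n + 1) le_rfl
  rw [hfout (n + 1) (Or.inr (by omega))] at hend
  have hcnz : c (n + 1) ≠ 0 := by
    have hmod : (n + 1) % 3 = 1 ∨ (n + 1) % 3 = 2 := by omega
    rcases hmod with hh | hh <;> simp [hcdef, hh]
  have hf1 : f 1 = 0 := by
    rcases mul_eq_zero.mp hend.symm with hh | hh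
    · exact hh
    · exact absurd hh hcnz
  have hfz : ∀ j, f j = 0 := by
    intro j
    by_cases hj : j ≤ n + 1
    · rw [hform j hj, hf1]; ring
    · exact hfout j (Or.inr (by omega))
  have hiff : ∀ k, ((2, k) ∈ M ↔ (2, k) ∈ M') := by
    intro k
    have hk := hfz k
    simp only [hfdef] at hk
    constructor <;> intro hmem <;> by_contra hc <;> simp [hmem, hc] at hk
  ext ⟨a, b⟩
  constructor <;> intro hw
  · have h2 := (hmemN M hM _ hw).1
    dsimp at h2; subst h2
    exact (hiff b).mp hw
  · have h2 := (hmemN M' hM' _ hw).1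
    dsimp at h2; subst h2
    exact (hiff b).mpr hw
end

section
/- Let m, n ≥ 1 with 4 ∤ (m+1) and 4 ∤ (n+1). Then there do not exist integers 1 ≤ k ≤ m, 1 ≤ l ≤ n such that, with x = πk/(m+1) and y = πl/(n+1), one has cos x + cos y + e^{ix}·cos 2y = 0 (as a complex number). -/
open Real

theorem stmt_14 (m n : ℕ) (hm : 1 ≤ m) (hn : 1 ≤ n)
    (h4m : ¬ (4 ∣ (m + 1))) (h4n : ¬ (4 ∣ (n + 1))) :
    ¬ ∃ k l : ℕ, 1 ≤ k ∧ k ≤ m ∧ 1 ≤ l ∧ l ≤ n ∧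
      (Real.cos (π * k / (m + 1)) : ℂ) + (Real.cos (π * l / (n + 1)) : ℂ) +
        Complex.exp ((π * k / (m + 1) : ℝ) * Complex.I) *
          (Real.cos (2 * (π * l / (n + 1))) : ℂ) = 0 := by
  rintro ⟨k, l, hk1, hkm, hl1, hln, heq⟩
  set x : ℝ := π * k / (m + 1) with hx
  set y : ℝ := π * l / (n + 1) with hy
  -- imaginary part
  have him := congrArg Complex.im heq
  simp only [Complex.add_im, Complex.mul_im, Complex.ofReal_im, Complex.ofReal_re,
    Complex.exp_ofReal_mul_I_re, Complex.exp_ofReal_mul_I_im, Complex.zero_im,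
    mul_zero, zero_add, add_zero, zero_mul] at him
  -- him : sin x * cos (2 * y) = 0  (hopefully)
  have hxpos : 0 < x := by
    apply div_pos
    · exact mul_pos Real.pi_pos (by exact_mod_cast hk1)
    · positivity
  have hxlt : x < π := by
    rw [hx, div_lt_iff₀ (by positivity)]
    have : (k : ℝ) < (m : ℝ) + 1 := by exact_mod_cast Nat.lt_succ_of_le hkm
    nlinarith [Real.pi_pos]
  have hsin : Real.sin x ≠ 0 := ne_of_gt (Real.sin_pos_of_pos_of_lt_pi hxpos hxlt)
  have hcos : Real.cos (2 * y) = 0 := by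
    rcases mul_eq_zero.mp him with h | h
    · exact absurd h hsin
    · exact h
  obtain ⟨j, hj⟩ := Real.cos_eq_zero_iff.mp hcos
  -- 2 * (π * l / (n+1)) = (2j+1) * π / 2
  have hne : ((n : ℝ) + 1) ≠ 0 := by positivity
  have hreal : (4 * l : ℝ) * π = ((2 * j + 1) * (n + 1) : ℝ) * π := by
    field_simp [hy] at hj
    have hy4 : 4 * y * ((n : ℝ) + 1) = 4 * l * π := by rw [hy]; field_simp
    linear_combination ((n : ℝ) + 1) * hj - hy4
  have hreal2 : (4 * l : ℝ) = ((2 * j + 1) * (n + 1) : ℝ) :=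
    mul_right_cancel₀ Real.pi_ne_zero hreal
  have hint : (4 * l : ℤ) = (2 * j + 1) * (n + 1) := by exact_mod_cast hreal2
  have hdvd : (4 : ℤ) ∣ (2 * j + 1) * (n + 1) := ⟨l, by linarith⟩
  have hcop : IsCoprime (4 : ℤ) (2 * j + 1) := ⟨-(j ^ 2 + j), 2 * j + 1, by ring⟩
  have : (4 : ℤ) ∣ (n + 1 : ℤ) := hcop.dvd_of_dvd_mul_left hdvd
  exact h4n (by exact_mod_cast this)
end
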